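/- arXiv:2210.04762 — 4 statements merged into one kernel-verified Lean document; each statement's English description precedes it below -/
import Mathlib

section
/- Let λ ∈ [P_{n+l−1}]_{≥l} and T ∈ Tab(l,λ). For every point a ∈ K^n such that Λ_l(a) is not ⊴ λ in the dominance order, the Specht polynomial satisfies f_T(a) = 0. -/
open MvPolynomial

namespace SpechtLL

/-- A partition of `N`: a non-increasing list of positive integers summing to `N`. -/
structure Partition (N : ℕ) where
  parts : List ℕ
  sorted : parts.Pairwise (· ≥ ·)
  pos : ∀ p ∈ parts, 0 < p
  sum_eq : parts.sum = N

/-- `domLE ν μ` means ν ⊴ μ in the dominance order. -/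
def domLE {N : ℕ} (nu mu : Partition N) : Prop :=
  ∀ i : ℕ, (nu.parts.take i).sum ≤ (mu.parts.take i).sum

/-- The first (largest) part λ₁ of a partition. -/
def partOne {N : ℕ} (lam : Partition N) : ℕ := lam.parts.headD 0

/-- The cells (i, j) (row i, column j, 0-indexed) of the Young diagram of a partition. -/
def cells {N : ℕ} (lam : Partition N) : Finset (ℕ × ℕ) :=
  (Finset.range lam.parts.length ×ˢ Finset.range (partOne lam)).filter
    (fun c => c.2 < lam.parts.getD c.1 0)

/-- The length λ⊥ⱼ of the j-th column of the Young diagram. -/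
def colLen {N : ℕ} (lam : Partition N) (j : ℕ) : ℕ :=
  lam.parts.countP (fun p => decide (j < p))

/-- The list of entries of the j-th column of a filling `T`, from top to bottom. -/
def colList {n N : ℕ} (lam : Partition N) (T : ℕ × ℕ → Fin n) (j : ℕ) : List (Fin n) :=
  (List.range (colLen lam j)).map fun i => T (i, j)

/-- The multiset of entries: `l` copies of the special entry `sp` and each other
element of `Fin n` exactly once. -/
def fillContent (n : ℕ) (l : ℕ) (sp : Fin n) : Multiset (Fin n) :=
  Multiset.replicate (l - 1) sp + (Finset.univ : Finset (Fin n)).val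

/-- `T` is a filling of the diagram of `lam` by the multiset consisting of `l` copies of `sp`
and each other element of `Fin n` once, with no two copies of `sp` in the same column. -/
def IsFilling {n N : ℕ} (l : ℕ) (sp : Fin n) (lam : Partition N) (T : ℕ × ℕ → Fin n) : Prop :=
  (cells lam).val.map T = fillContent n l sp ∧
    ∀ j : ℕ, (colList lam T j).count sp ≤ 1

/-- Standard tableau: columns strictly increase from top to bottom and rows are
non-decreasing from left to right. -/
def IsStandard {n N : ℕ} (lam : Partition N) (T : ℕ × ℕ → Fin n) : Prop :=
  (∀ i j : ℕ, (i + 1, j) ∈ cells lam → T (i, j) < T (i + 1, j)) ∧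
  (∀ i j : ℕ, (i, j + 1) ∈ cells lam → T (i, j) ≤ T (i, j + 1))

variable (K : Type*) [Field K]

/-- The difference product of a list of (indices of) variables. -/
noncomputable def deltaList {n : ℕ} : List (Fin n) → MvPolynomial (Fin n) K
  | [] => 1
  | a :: rest => ((rest.map fun b => X a - X b).prod) * deltaList rest

/-- The Specht polynomial of a filling `T` of shape `lam`. -/
noncomputable def spechtPoly {n N : ℕ} (lam : Partition N) (T : ℕ × ℕ → Fin n) : MvPolynomial (Fin n) K :=
  ((List.range (partOne lam)).map fun j => deltaList K (colList lam T j)).prod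

/-- The Specht ideal generated by all Specht polynomials of fillings of shape `lam`
(with `l` copies of the special entry `sp`). -/
noncomputable def spechtIdeal {n N : ℕ} (l : ℕ) (sp : Fin n) (lam : Partition N) :
    Ideal (MvPolynomial (Fin n) K) :=
  Ideal.span {f | ∃ T, IsFilling l sp lam T ∧ f = spechtPoly K lam T}

/-- The lexicographic order on monomials with x₁ < x₂ < ⋯ < xₙ: the larger monomial is
decided at the highest-index variable where the exponents differ. -/
def lexLt {n : ℕ} (a b : Fin n →₀ ℕ) : Prop :=
  ∃ i : Fin n, a i < b i ∧ ∀ j : Fin n, i < j → a j = b j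

/-- A monomial order: a strict linear order on exponent vectors compatible with
addition and having 0 as least element. -/
def IsMonomialOrder {n : ℕ} (lt : (Fin n →₀ ℕ) → (Fin n →₀ ℕ) → Prop) : Prop :=
  (∀ a b c, lt a b → lt b c → lt a c) ∧
  (∀ a, ¬ lt a a) ∧
  (∀ a b, a = b ∨ lt a b ∨ lt b a) ∧
  (∀ a b c, lt a b → lt (a + c) (b + c)) ∧
  (∀ a, a ≠ 0 → lt 0 a)

/-- `d` is the exponent vector of the initial monomial of `f` with respect to the
monomial order `lt`. -/
def IsInitialFor {n : ℕ} (lt : (Fin n →₀ ℕ) → (Fin n →₀ ℕ) → Prop)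
    (f : MvPolynomial (Fin n) K) (d : Fin n →₀ ℕ) : Prop :=
  d ∈ f.support ∧ ∀ e ∈ f.support, e ≠ d → lt e d

/-- `G` is a Gröbner basis of `I` w.r.t. `lt`: `G ⊆ I` and the initial monomial of every
nonzero element of `I` is divisible by the initial monomial of some element of `G`. -/
def IsGroebnerBasisFor {n : ℕ} (lt : (Fin n →₀ ℕ) → (Fin n →₀ ℕ) → Prop)
    (G : Set (MvPolynomial (Fin n) K)) (I : Ideal (MvPolynomial (Fin n) K)) : Prop :=
  (∀ g ∈ G, g ∈ I) ∧
  ∀ f ∈ I, f ≠ 0 → ∀ d, IsInitialFor K lt f d →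
    ∃ g ∈ G, ∃ e, IsInitialFor K lt g e ∧ e ≤ d

/-- The ideal of polynomials vanishing on all points satisfying `P`. -/
def vanishingIdeal (n : ℕ) (P : (Fin n → K) → Prop) : Ideal (MvPolynomial (Fin n) K) where
  carrier := {f | ∀ a : Fin n → K, P a → MvPolynomial.eval a f = 0}
  add_mem' := by
    intro f g hf hg a ha
    simp only [Set.mem_setOf_eq] at *
    rw [map_add, hf a ha, hg a ha, add_zero]
  zero_mem' := by intro a _; simp
  smul_mem' := by
    intro c f hf a ha
    simp only [Set.mem_setOf_eq, smul_eq_mul, map_mul] at *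
    rw [hf a ha, mul_zero]

/-- `mu` is the multiplicity partition of the multiset `M`: the parts of `mu` are
exactly the multiplicities of the distinct elements of `M`. -/
def IsMultPartition {M' : ℕ} [DecidableEq K] (M : Multiset K) (mu : Partition M') : Prop :=
  (↑mu.parts : Multiset ℕ) = M.toFinset.val.map fun α => M.count α

/-- The multiset of values of the vector `a_{(l)} ∈ K^{n+l-1}` obtained from `a ∈ Kⁿ`
by repeating the first coordinate `l` times. -/
def lamL {n : ℕ} [NeZero n] (l : ℕ) (a : Fin n → K) : Multiset K :=
  Multiset.replicate (l - 1) (a 0) + (Finset.univ : Finset (Fin n)).val.map a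

/-- The multiset of parts of the partition `mu + ⟨i⟩` (i is 1-indexed). -/
def addBoxMultiset {N : ℕ} (mu : Partition N) (i : ℕ) : Multiset ℕ :=
  if i ≤ mu.parts.length then
    ((↑mu.parts : Multiset ℕ).erase (mu.parts.getD (i - 1) 0)) + {mu.parts.getD (i - 1) 0 + 1}
  else ↑mu.parts + {1}

/-- `nu = mu + ⟨i⟩`. -/
def IsAddBox {N M : ℕ} (mu : Partition N) (i : ℕ) (nu : Partition M) : Prop :=
  (↑nu.parts : Multiset ℕ) = addBoxMultiset mu i

/-- The largest element of `Fin n`. -/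
def finLast (n : ℕ) [NeZero n] : Fin n := ⟨n - 1, by have := NeZero.ne n; omega⟩

/-- The number `w(T)` of squares of `T` lying above some square filled with `sp`. -/
def wval {n N : ℕ} (lam : Partition N) (sp : Fin n) (T : ℕ × ℕ → Fin n) : ℕ :=
  ((cells lam).filter fun c =>
    ∃ i' ∈ Finset.range (colLen lam c.2), c.1 < i' ∧ T (i', c.2) = sp).card

/-- `mu = sh_{<n}(T)`: the shape obtained from `T` (of shape `lam`) by removing all
squares filled with `sp`, described via column lengths. -/
def HasShapeRemoved {n N M : ℕ} (lam : Partition N) (sp : Fin n) (T : ℕ × ℕ → Fin n)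
    (mu : Partition M) : Prop :=
  ∀ j : ℕ, colLen mu j + (colList lam T j).count sp = colLen lam j

/-- Difference product of a list, omitting the factors where both indices are < m. -/
noncomputable def deltaListAvoid (m : ℕ) {n : ℕ} : List (Fin n) → MvPolynomial (Fin n) K
  | [] => 1
  | a :: rest =>
      ((rest.filter fun b => decide (m ≤ a.val ∨ m ≤ b.val)).map fun b => X a - X b).prod *
        deltaListAvoid m rest

/-- Δ_m = Δ({1, …, m}), the difference product of the first m variables. -/
noncomputable def deltaM (n m : ℕ) : MvPolynomial (Fin n) K :=
  deltaList K ((List.finRange n).take m)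

/-- `f_{m,T} = lcm(f_T, Δ_m)`: the product of `Δ_m` with all factors of the Specht
polynomial `f_T` not already occurring in `Δ_m`. -/
noncomputable def fmPoly {n N : ℕ} (m : ℕ) (lam : Partition N) (T : ℕ × ℕ → Fin n) :
    MvPolynomial (Fin n) K :=
  deltaM K n m *
    ((List.range (partOne lam)).map fun j => deltaListAvoid K m (colList lam T j)).prod

/-- The ideal `I_{l,m,λ}` generated by the `f_{m,T}`, `T ∈ Tab(l,λ)`. -/
noncomputable def spechtIdealM {n N : ℕ} (m l : ℕ) (sp : Fin n) (lam : Partition N) :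
    Ideal (MvPolynomial (Fin n) K) :=
  Ideal.span {f | ∃ T, IsFilling l sp lam T ∧ f = fmPoly K m lam T}


lemma sorted_getD_lt_iff : ∀ (P : List ℕ), P.Pairwise (· ≥ ·) → ∀ i j : ℕ,
    (j < P.getD i 0 ↔ i < P.countP (fun p => decide (j < p)))
  | [], _, i, j => by simp
  | x :: P', hs, 0, j => by
    rw [List.countP_cons, List.getD_cons_zero]
    by_cases hjx : j < x
    · simp [hjx]
    · have hle := (List.pairwise_cons.mp hs).1
      have h0 : P'.countP (fun p => decide (j < p)) = 0 := by
        rw [List.countP_eq_zero]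
        intro p hp
        have : p ≤ x := hle p hp
        simpa using by omega
      simp [hjx, h0]
  | x :: P', hs, i + 1, j => by
    have hs' := (List.pairwise_cons.mp hs).2
    have hle := (List.pairwise_cons.mp hs).1
    rw [List.countP_cons]
    have ih := sorted_getD_lt_iff P' hs' i j
    simp only [List.getD_cons_succ]
    constructor
    · intro h
      have hi : i < P'.length := by
        by_contra hi
        rw [List.getD_eq_default _ _ (Nat.le_of_not_lt hi)] at h
        omega
      have hmem : P'.getD i 0 ≤ x := by
        rw [List.getD_eq_getElem _ _ hi]
        exact hle _ (List.getElem_mem hi)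
      have hjx : j < x := lt_of_lt_of_le h hmem
      have hd : (if decide (j < x) = true then 1 else 0) = 1 := by simp [hjx]
      rw [hd]
      have := ih.mp h
      omega
    · intro h
      by_cases hjx : j < x
      · have hd : (if decide (j < x) = true then 1 else 0) = 1 := by simp [hjx]
        rw [hd] at h
        exact ih.mpr (by omega)
      · have h0 : P'.countP (fun p => decide (j < p)) = 0 := by
          rw [List.countP_eq_zero]
          intro p hp
          have : p ≤ x := hle p hp
          simpa using by omega
        simp [hjx, h0] at h

lemma countP_take_sorted : ∀ (P : List ℕ), P.Pairwise (· ≥ ·) → ∀ (k j : ℕ),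
    (P.take k).countP (fun p => decide (j < p)) = min (P.countP (fun p => decide (j < p))) k
  | [], _, k, j => by simp
  | x :: P', hs, 0, j => by simp
  | x :: P', hs, k + 1, j => by
    have hs' := (List.pairwise_cons.mp hs).2
    have hle := (List.pairwise_cons.mp hs).1
    rw [List.take_succ_cons, List.countP_cons, List.countP_cons,
      countP_take_sorted P' hs' k j]
    by_cases hjx : j < x
    · have hd : (if decide (j < x) = true then 1 else 0) = 1 := by simp [hjx]
      rw [hd]
      omega
    · have h0 : P'.countP (fun p => decide (j < p)) = 0 := by
        rw [List.countP_eq_zero]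
        intro p hp
        have : p ≤ x := hle p hp
        simpa using by omega
      have h0' : (P'.take k).countP (fun p => decide (j < p)) = 0 := by
        rw [List.countP_eq_zero]
        intro p hp
        have : p ≤ x := hle p (List.take_subset _ _ hp)
        simpa using by omega
      simp [hjx, h0, h0']

lemma sum_countP_range : ∀ (Q : List ℕ) (m : ℕ), (∀ p ∈ Q, p ≤ m) →
    (∑ j ∈ Finset.range m, Q.countP (fun p => decide (j < p))) = Q.sum
  | [], m, _ => by simp
  | x :: Q', m, h => by
    have hx : x ≤ m := h x (by simp)
    have ih := sum_countP_range Q' m (fun p hp => h p (by simp [hp]))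
    simp only [List.countP_cons, List.sum_cons]
    rw [Finset.sum_add_distrib, ih]
    have : (∑ j ∈ Finset.range m, if decide (j < x) = true then 1 else 0) = x := by
      rw [Finset.sum_ite, Finset.sum_const, Finset.sum_const, smul_eq_mul, smul_eq_mul,
        mul_one, mul_zero, add_zero]
      have : (Finset.range m).filter (fun j => decide (j < x) = true) = Finset.range x := by
        ext j
        simp only [Finset.mem_filter, Finset.mem_range, decide_eq_true_eq]
        omega
      rw [this, Finset.card_range]
    omega

lemma exists_le_map {α β : Type*} [DecidableEq α] [DecidableEq β] (f : α → β) :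
    ∀ (t : Multiset β) (s : Multiset α), t ≤ s.map f → ∃ s' ≤ s, t = s'.map f := by
  intro t
  induction t using Multiset.induction_on with
  | empty => intro s _; exact ⟨0, Multiset.zero_le s, rfl⟩
  | cons b t ih =>
    intro s hts
    have hb : b ∈ s.map f := Multiset.mem_of_le hts (Multiset.mem_cons_self b t)
    obtain ⟨x, hx, rfl⟩ := Multiset.mem_map.mp hb
    have ht : t ≤ (s.erase x).map f := by
      rw [Multiset.map_erase_of_mem f s hx]
      have := Multiset.erase_le_erase (f x) hts
      rwa [Multiset.erase_cons_head] at this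
    obtain ⟨s'', hs'', rfl⟩ := ih (s.erase x) ht
    refine ⟨x ::ₘ s'', ?_, by rw [Multiset.map_cons]⟩
    calc x ::ₘ s'' ≤ x ::ₘ s.erase x := Multiset.cons_le_cons x hs''
    _ = s := Multiset.cons_erase hx

lemma sum_count_le_card {K : Type*} [DecidableEq K] (S : Finset K) (m : Multiset K) :
    (∑ α ∈ S, m.count α) ≤ Multiset.card m := by
  induction m using Multiset.induction_on with
  | empty => simp
  | cons b m ih =>
    simp only [Multiset.count_cons, Multiset.card_cons, Finset.sum_add_distrib]
    have : (∑ α ∈ S, if α = b then 1 else 0) ≤ 1 := by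
      rw [Finset.sum_ite_eq' S b (fun _ => 1)]
      split <;> omega
    omega

lemma mem_headD_le {P : List ℕ} (hs : P.Pairwise (· ≥ ·)) {p : ℕ} (hp : p ∈ P) :
    p ≤ P.headD 0 := by
  match P with
  | x :: P' =>
    rcases List.mem_cons.mp hp with rfl | hp'
    · simp
    · exact (List.pairwise_cons.mp hs).1 p hp'

section Cells
variable {N : ℕ} (lam : Partition N)

lemma colLen_le_length (j : ℕ) : colLen lam j ≤ lam.parts.length :=
  List.countP_le_length

lemma mem_cells (i j : ℕ) : (i, j) ∈ cells lam ↔ j < partOne lam ∧ i < colLen lam j := by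
  unfold cells colLen
  simp only [Finset.mem_filter, Finset.mem_product, Finset.mem_range]
  rw [← sorted_getD_lt_iff lam.parts lam.sorted i j]
  constructor
  · rintro ⟨⟨_, h2⟩, h3⟩; exact ⟨h2, h3⟩
  · rintro ⟨h2, h3⟩
    refine ⟨⟨?_, h2⟩, h3⟩
    by_contra hi
    rw [List.getD_eq_default _ _ (Nat.le_of_not_lt hi)] at h3
    omega

lemma cells_val_eq : (cells lam).val =
    (Multiset.range (partOne lam)).bind
      (fun j => (Multiset.range (colLen lam j)).map (fun i => (i, j))) := by
  have hnd : Multiset.Nodup ((Multiset.range (partOne lam)).bind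
      (fun j => (Multiset.range (colLen lam j)).map (fun i => (i, j)))) := by
    rw [Multiset.nodup_bind]
    constructor
    · intro j _
      exact (Multiset.nodup_range _).map (fun i₁ i₂ h => (Prod.mk.injEq _ _ _ _ ▸ h : _ ∧ _).1)
    · have : (Multiset.range (partOne lam)).Pairwise (fun j j' => j ≠ j') := by
        refine ⟨List.range (partOne lam), rfl, ?_⟩
        exact List.pairwise_lt_range.imp (fun h => Nat.ne_of_lt h)
      obtain ⟨L, hL, hp⟩ := this
      refine ⟨L, hL, hp.imp ?_⟩
      intro j j' hne
      rw [Function.onFun, Multiset.disjoint_left]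
      rintro ⟨i, j₀⟩ h1 h2
      obtain ⟨i1, _, h1e⟩ := Multiset.mem_map.mp h1
      obtain ⟨i2, _, h2e⟩ := Multiset.mem_map.mp h2
      apply hne
      injection h1e with e1 e2
      injection h2e with e3 e4
      omega
  rw [(cells lam).nodup.ext hnd]
  rintro ⟨i, j⟩
  rw [← Finset.mem_def, mem_cells]
  simp only [Multiset.mem_bind, Multiset.mem_map, Multiset.mem_range]
  constructor
  · rintro ⟨hj, hi⟩; exact ⟨j, hj, i, hi, rfl⟩
  · rintro ⟨j', hj', i', hi', he⟩
    injection he with e1 e2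
    subst e1; subst e2
    exact ⟨hj', hi'⟩

end Cells

section Count
variable {K : Type*} [Field K] [DecidableEq K]

lemma coe_colvals {n N : ℕ} (lam : Partition N) (T : ℕ × ℕ → Fin n) (a : Fin n → K) (j : ℕ) :
    (((colList lam T j).map a : List K) : Multiset K) =
      Multiset.map (a ∘ T) (Multiset.map (fun i => (i, j)) (Multiset.range (colLen lam j))) := by
  rw [Multiset.map_map]
  show ((((List.range (colLen lam j)).map fun i => T (i, j)).map a : List K) : Multiset K) = _
  rw [List.map_map]
  rfl

lemma count_lamL {n N : ℕ} [NeZero n] (l : ℕ) (lam : Partition N) (T : ℕ × ℕ → Fin n)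
    (hT : IsFilling l (0 : Fin n) lam T) (a : Fin n → K) (α : K) :
    Multiset.count α (lamL K l a) =
      ∑ j ∈ Finset.range (partOne lam), ((colList lam T j).map a).count α := by
  have hmap : Multiset.map a (fillContent n l (0 : Fin n)) = lamL K l a := by
    simp [fillContent, lamL, Multiset.map_replicate]
  rw [← hmap, ← hT.1, Multiset.map_map, cells_val_eq, Multiset.map_bind, Multiset.count_bind,
    Finset.sum_eq_multiset_sum, Finset.range_val]
  congr 1
  apply Multiset.map_congr rfl
  intro j _
  rw [← Multiset.coe_count, coe_colvals]

lemma pairwise_of_eval_deltaList_ne {n : ℕ} (a : Fin n → K) :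
    ∀ (L : List (Fin n)), MvPolynomial.eval a (deltaList K L) ≠ 0 →
      L.Pairwise (fun x y => a x ≠ a y)
  | [], _ => List.Pairwise.nil
  | x :: rest, h => by
    rw [deltaList, map_mul] at h
    obtain ⟨h1, h2⟩ := mul_ne_zero_iff.mp h
    refine List.Pairwise.cons ?_ (pairwise_of_eval_deltaList_ne a rest h2)
    intro b hb heq
    apply h1
    rw [map_list_prod]
    apply List.prod_eq_zero
    rw [List.map_map]
    refine List.mem_map.mpr ⟨b, hb, ?_⟩
    simp [heq]

lemma eval_col_ne {n N : ℕ} (lam : Partition N) (T : ℕ × ℕ → Fin n) (a : Fin n → K)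
    (hne : MvPolynomial.eval a (spechtPoly K lam T) ≠ 0) {j : ℕ} (hj : j < partOne lam) :
    MvPolynomial.eval a (deltaList K (colList lam T j)) ≠ 0 := by
  intro h0
  apply hne
  rw [spechtPoly, map_list_prod]
  apply List.prod_eq_zero
  rw [List.map_map]
  exact List.mem_map.mpr ⟨j, List.mem_range.mpr hj, by simpa using h0⟩

lemma nodup_colvals {n N : ℕ} (lam : Partition N) (T : ℕ × ℕ → Fin n) (a : Fin n → K)
    (hne : MvPolynomial.eval a (spechtPoly K lam T) ≠ 0) {j : ℕ} (hj : j < partOne lam) :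
    ((colList lam T j).map a).Nodup := by
  have hp := pairwise_of_eval_deltaList_ne a _ (eval_col_ne lam T a hne hj)
  exact List.pairwise_map.mpr hp

end Count

/-- Lemma `f_T(a)=0`. If Λ_l(a) is not ⊴ λ, then f_T(a) = 0 for every
tableau T ∈ Tab(l,λ). -/
theorem statement1 (K : Type*) [Field K] [Infinite K] [DecidableEq K] (n l : ℕ) [NeZero n]
    (hl : 0 < l) (lam : Partition (n + l - 1)) (hlam : l ≤ partOne lam)
    (T : ℕ × ℕ → Fin n) (hT : IsFilling l (0 : Fin n) lam T)
    (a : Fin n → K)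
    (ha : ∀ mu : Partition (n + l - 1), IsMultPartition K (lamL K l a) mu → ¬ domLE mu lam) :
    MvPolynomial.eval a (spechtPoly K lam T) = 0 := by
  by_contra hne
  set Lm : Multiset K := lamL K l a with hLm
  set C : Multiset ℕ := Lm.toFinset.val.map (fun α => Lm.count α) with hC
  set pl : List ℕ := (Multiset.sort C (· ≤ ·)).reverse with hpl
  have hcoe : (↑pl : Multiset ℕ) = C := by
    rw [hpl, Multiset.coe_reverse, Multiset.sort_eq]
  have hsorted : pl.Pairwise (· ≥ ·) := by
    refine List.pairwise_reverse.mpr ?_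
    exact Multiset.pairwise_sort (s := C) (r := (· ≤ ·))
  have hpos : ∀ p ∈ pl, 0 < p := by
    intro p hp
    have : p ∈ C := hcoe ▸ (Multiset.mem_coe.mpr hp)
    obtain ⟨α, hα, rfl⟩ := Multiset.mem_map.mp this
    exact Multiset.count_pos.mpr (Multiset.mem_toFinset.mp hα)
  have hcard : Multiset.card Lm = (l - 1) + n := by
    simp [hLm, lamL]
  have hsum : pl.sum = n + l - 1 := by
    have h1 : pl.sum = C.sum := by rw [← hcoe, Multiset.sum_coe]
    have h2 : C.sum = Multiset.card Lm := by
      rw [hC, ← Finset.sum_eq_multiset_sum]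
      exact Multiset.toFinset_sum_count_eq Lm
    omega
  set mu : Partition (n + l - 1) := ⟨pl, hsorted, hpos, hsum⟩ with hmu
  have hmult : IsMultPartition K Lm mu := hcoe.trans hC
  refine ha mu hmult ?_
  intro i
  -- the i-th partial sum inequality
  have htle : (↑(mu.parts.take i) : Multiset ℕ) ≤ C := by
    rw [← hcoe]
    exact Multiset.coe_le.mpr (List.take_sublist i pl).subperm
  obtain ⟨s', hs'le, hmapeq⟩ := exists_le_map (fun α => Multiset.count α Lm) _ _ htle
  have hnd : s'.Nodup := Multiset.nodup_of_le hs'le Lm.toFinset.nodup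
  set S : Finset K := ⟨s', hnd⟩ with hS
  set k := S.card with hk
  have hki : k ≤ i := by
    have h1 : k = (mu.parts.take i).length := by
      have := congrArg Multiset.card hmapeq
      simpa [hk, hS, Finset.card] using this.symm
    rw [h1]
    simp [List.length_take]
  have hsum_t : (mu.parts.take i).sum = ∑ α ∈ S, Multiset.count α Lm := by
    have h1 : (mu.parts.take i).sum = (↑(mu.parts.take i) : Multiset ℕ).sum :=
      (Multiset.sum_coe _).symm
    rw [h1, hmapeq, Finset.sum_eq_multiset_sum]
  -- bound each column
  have hcolbound : ∀ j < partOne lam,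
      (∑ α ∈ S, ((colList lam T j).map a).count α) ≤ min (colLen lam j) k := by
    intro j hj
    refine le_min ?_ ?_
    · have h1 := sum_count_le_card S (↑((colList lam T j).map a) : Multiset K)
      simp only [Multiset.coe_count, Multiset.coe_card] at h1
      have h2 : ((colList lam T j).map a).length = colLen lam j := by
        simp [colList]
      rwa [h2] at h1
    · have hnodup := nodup_colvals lam T a hne hj
      calc (∑ α ∈ S, ((colList lam T j).map a).count α) ≤ ∑ _α ∈ S, 1 :=
            Finset.sum_le_sum (fun α _ => List.nodup_iff_count_le_one.mp hnodup α)
      _ = k := by simp [hk]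
  have hmain : (∑ α ∈ S, Multiset.count α Lm) ≤ (lam.parts.take k).sum := by
    have h1 : (∑ α ∈ S, Multiset.count α Lm) =
        ∑ j ∈ Finset.range (partOne lam), ∑ α ∈ S, ((colList lam T j).map a).count α := by
      rw [Finset.sum_comm]
      exact Finset.sum_congr rfl (fun α _ => count_lamL l lam T hT a α)
    rw [h1]
    have h2 : ∀ j ∈ Finset.range (partOne lam),
        (∑ α ∈ S, ((colList lam T j).map a).count α) ≤
          (lam.parts.take k).countP (fun p => decide (j < p)) := by
      intro j hj
      rw [countP_take_sorted lam.parts lam.sorted k j]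
      exact hcolbound j (Finset.mem_range.mp hj)
    calc (∑ j ∈ Finset.range (partOne lam), ∑ α ∈ S, ((colList lam T j).map a).count α)
        ≤ ∑ j ∈ Finset.range (partOne lam), (lam.parts.take k).countP (fun p => decide (j < p)) :=
          Finset.sum_le_sum h2
    _ = (lam.parts.take k).sum := by
          apply sum_countP_range
          intro p hp
          exact mem_headD_le lam.sorted (List.take_subset _ _ hp)
  have hfinal : (lam.parts.take k).sum ≤ (lam.parts.take i).sum := by
    have h1 : lam.parts.take k = (lam.parts.take i).take k := by
      rw [List.take_take, min_eq_left hki]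
    rw [h1, ← List.sum_take_add_sum_drop (lam.parts.take i) k]
    exact Nat.le_add_right _ _
  rw [hsum_t]
  exact le_trans hmain hfinal

end SpechtLL
end

section
/- Let F ⊆ [P_{n+l−1}]_{≥l} be a nonempty upper filter and let f ∈ J_{l,F} be written as f = g_d x_n^d + … + g_1 x_n + g_0 with g_0,…,g_d ∈ K[x_1,…,x_{n−1}] and g_d ≠ 0. Then g_0,…,g_d all belong to J_{l,F_{d+1}}, the corresponding vanishing ideal in K[x_1,…,x_{n−1}] attached to the upper filter F_{d+1} ⊆ [P_{n+l−2}]_{≥l}. -/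
open MvPolynomial

namespace SpechtLL

variable (K : Type*) [Field K]

section KeyHelpers

/-- Increment the first occurrence of `c` in a list. -/
def incFirst (c : ℕ) : List ℕ → List ℕ
  | [] => []
  | a :: r => if a = c then (a + 1) :: r else a :: incFirst c r

lemma incFirst_of_not_mem (c : ℕ) : ∀ (L : List ℕ), c ∉ L → incFirst c L = L
  | [], _ => rfl
  | a :: r, h => by
    have hac : a ≠ c := fun e => h (e ▸ List.mem_cons_self)
    simp [incFirst, hac, incFirst_of_not_mem c r (fun hc => h (List.mem_cons_of_mem a hc))]

lemma mem_incFirst {c x : ℕ} : ∀ {L : List ℕ}, x ∈ incFirst c L → x = c + 1 ∨ x ∈ L := by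
  intro L
  induction L with
  | nil => simp [incFirst]
  | cons a r ih =>
    by_cases hac : a = c
    · subst hac; simp [incFirst]
      rintro (h | h) <;> tauto
    · simp only [incFirst, if_neg hac, List.mem_cons]
      rintro (h | h)
      · tauto
      · rcases ih h with h' | h' <;> tauto

lemma incFirst_coe (c : ℕ) : ∀ (L : List ℕ), c ∈ L →
    (↑(incFirst c L) : Multiset ℕ) = (c + 1) ::ₘ ((↑L : Multiset ℕ).erase c)
  | a :: r, h => by
    by_cases hac : a = c
    · subst hac; simp [incFirst]
    · have hcr : c ∈ r := (List.mem_cons.mp h).resolve_left (fun e => hac e.symm)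
      have ih := incFirst_coe c r hcr
      simp only [incFirst, if_neg hac]
      rw [← Multiset.cons_coe, ← Multiset.cons_coe, ih,
        Multiset.erase_cons_tail _ (by simp [hac]), Multiset.cons_swap]

lemma incFirst_sum (c : ℕ) : ∀ (L : List ℕ), c ∈ L → (incFirst c L).sum = L.sum + 1
  | a :: r, h => by
    by_cases hac : a = c
    · subst hac; simp [incFirst]; ring
    · have hcr : c ∈ r := (List.mem_cons.mp h).resolve_left (fun e => hac e.symm)
      simp [incFirst, hac, incFirst_sum c r hcr]; ring

lemma incFirst_sorted {c : ℕ} : ∀ {L : List ℕ}, L.Pairwise (· ≥ ·) → (incFirst c L).Pairwise (· ≥ ·) := by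
  intro L
  induction L with
  | nil => intro; simp [incFirst]
  | cons a r ih =>
    intro hs
    rw [List.pairwise_cons] at hs
    by_cases hac : a = c
    · rw [show incFirst c (a :: r) = (a + 1) :: r from by simp [incFirst, hac],
        List.pairwise_cons]
      exact ⟨fun b hb => le_trans (hs.1 b hb) (Nat.le_succ a), hs.2⟩
    · rw [show incFirst c (a :: r) = a :: incFirst c r from by simp [incFirst, hac],
        List.pairwise_cons]
      refine ⟨fun b hb => ?_, ih hs.2⟩
      rcases mem_incFirst hb with h | h
      · subst h
        by_cases hcr : c ∈ r
        · have := hs.1 c hcr; omega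
        · rw [incFirst_of_not_mem c r hcr] at hb
          exact hs.1 _ hb
      · exact hs.1 _ h

lemma take_sum_incFirst (c : ℕ) : ∀ (L : List ℕ) (i : ℕ),
    ((incFirst c L).take i).sum = (L.take i).sum + (if c ∈ L.take i then 1 else 0)
  | [], i => by simp [incFirst]
  | a :: r, 0 => by simp
  | a :: r, i + 1 => by
    by_cases hac : a = c
    · subst hac
      rw [show incFirst a (a :: r) = (a + 1) :: r from by simp [incFirst]]
      simp; ring
    · rw [show incFirst c (a :: r) = a :: incFirst c r from by simp [incFirst, hac]]
      simp only [List.take_succ_cons, List.sum_cons, take_sum_incFirst c r i, List.mem_cons]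
      have : ¬ (c = a) := fun h => hac h.symm
      simp [this]
      ring

lemma mem_take_of_ge : ∀ {L : List ℕ} {i c c' : ℕ}, L.Pairwise (· ≥ ·) → c ∈ L →
    c' ∈ L.take i → c' ≤ c → c ∈ L.take i := by
  intro L
  induction L with
  | nil => simp
  | cons a r ih =>
    intro i c c' hs hc hc' hle
    cases i with
    | zero => simp at hc'
    | succ i =>
      rw [List.pairwise_cons] at hs
      simp only [List.take_succ_cons, List.mem_cons] at hc' ⊢
      by_cases hac : c = a
      · exact Or.inl hac
      · have hcr : c ∈ r := (List.mem_cons.mp hc).resolve_left hac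
        rcases hc' with h | h
        · exfalso; have := hs.1 c hcr; omega
        · exact Or.inr (ih hs.2 hcr h hle)

lemma getD_le_of_mem_take : ∀ {L : List ℕ} {d x : ℕ}, L.Pairwise (· ≥ ·) →
    x ∈ L.take (d + 1) → d < L.length → L.getD d 0 ≤ x := by
  intro L
  induction L with
  | nil => simp
  | cons a r ih =>
    intro d x hs hx hd
    rw [List.pairwise_cons] at hs
    cases d with
    | zero =>
      simp only [List.take_succ_cons, List.take_zero, List.mem_singleton] at hx
      simp [hx]
    | succ d =>
      simp only [List.take_succ_cons, List.mem_cons] at hx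
      simp only [List.getD_cons_succ]
      rcases hx with h | h
      · subst h
        have hd' : d < r.length := by simpa using hd
        have hget : r.getD d 0 ∈ r := by
          rw [List.getD_eq_getElem r 0 hd']
          exact List.getElem_mem hd'
        exact hs.1 _ hget
      · exact ih hs.2 h (by simpa using hd)

lemma headD_le_incFirst (c : ℕ) (L : List ℕ) : L.headD 0 ≤ (incFirst c L).headD 0 := by
  cases L with
  | nil => simp [incFirst]
  | cons a r =>
    by_cases hac : a = c
    · simp [incFirst, hac]
    · simp [incFirst, hac]

lemma cons_add_multiset {α : Type*} (s u : Multiset α) (x : α) :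
    s + (x ::ₘ u) = x ::ₘ (s + u) := by
  rw [← Multiset.singleton_add, ← Multiset.singleton_add, ← add_assoc, add_comm s {x}, add_assoc]

lemma mem_vanishingIdeal {K : Type*} [Field K] {n : ℕ} {P : (Fin n → K) → Prop}
    {f : MvPolynomial (Fin n) K} :
    f ∈ vanishingIdeal K n P ↔ ∀ a, P a → MvPolynomial.eval a f = 0 := Iff.rfl

lemma lamL_snoc {K : Type*} [Field K] (n l : ℕ) [NeZero n] (b : Fin n → K) (t : K) :
    lamL K l (Fin.snoc b t) = t ::ₘ lamL K l b := by
  unfold lamL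
  have h0 : (Fin.snoc b t : Fin (n + 1) → K) 0 = b 0 := by
    have : (0 : Fin (n + 1)) = Fin.castSucc (0 : Fin n) := (Fin.castSucc_zero').symm
    rw [this, Fin.snoc_castSucc]
  have huniv : (Finset.univ : Finset (Fin (n + 1))).val.map (Fin.snoc b t) =
      t ::ₘ (Finset.univ : Finset (Fin n)).val.map b := by
    rw [Fin.univ_castSuccEmb, Finset.cons_val, Multiset.map_cons, Fin.snoc_last,
      Finset.map_val, Multiset.map_map]
    congr 1
    apply Multiset.map_congr rfl
    intro x _
    simp
  rw [h0, huniv, cons_add_multiset]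

end KeyHelpers

/-- Lemma `keylemma`. If f = Σ gᵢ xₙⁱ ∈ J_{l,F} (ambient ring in n+1
variables x₁,…,x_{n+1}, so the "body" ring has n variables), then each gᵢ ∈ J_{l,F_{d+1}}. -/
theorem statement3 (K : Type*) [Field K] [Infinite K] [DecidableEq K] (n l d : ℕ) [NeZero n]
    (hl : 0 < l)
    (F : Set (Partition (n + 1 + l - 1)))
    (hFsub : ∀ mu ∈ F, l ≤ partOne mu)
    (hFup : ∀ mu ∈ F, ∀ nu : Partition (n + 1 + l - 1), l ≤ partOne nu → domLE mu nu → nu ∈ F)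
    (hFne : F.Nonempty)
    (g : ℕ → MvPolynomial (Fin n) K) (hgd : g d ≠ 0)
    (f : MvPolynomial (Fin (n + 1)) K)
    (hf : f = ∑ i ∈ Finset.range (d + 1),
        MvPolynomial.rename Fin.castSucc (g i) * MvPolynomial.X (Fin.last n) ^ i)
    (hfJ : f ∈ vanishingIdeal K (n + 1)
        (fun a => ∃ mu ∈ F, IsMultPartition K (lamL K l a) mu)) :
    ∀ i ≤ d, g i ∈ vanishingIdeal K n (fun a =>
      ∃ mu : Partition (n + l - 1),
        (l ≤ partOne mu ∧ ∃ nu ∈ F, IsAddBox mu (d + 1) nu) ∧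
        IsMultPartition K (lamL K l a) mu) := by
  intro i hid
  rw [mem_vanishingIdeal]
  intro b hb
  obtain ⟨mu, ⟨hmul, nu, hnuF, hnu⟩, hmp⟩ := hb
  classical
  set M := lamL K l b with hM
  set L := mu.parts with hLdef
  have hLs : L.Pairwise (· ≥ ·) := mu.sorted
  have hLsum : L.sum = n + l - 1 := mu.sum_eq
  have hmp' : (↑L : Multiset ℕ) = M.toFinset.val.map (fun α => M.count α) := hmp
  -- the one-variable polynomial h(t) = f(b, t)
  set h : Polynomial K :=
    ∑ j ∈ Finset.range (d + 1), Polynomial.C (MvPolynomial.eval b (g j)) * Polynomial.X ^ j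
    with hh
  have hevalh : ∀ t : K, Polynomial.eval t h = MvPolynomial.eval (Fin.snoc b t) f := by
    intro t
    rw [hf, hh, map_sum, Polynomial.eval_finset_sum]
    refine Finset.sum_congr rfl fun j _ => ?_
    rw [map_mul, map_pow, MvPolynomial.eval_X, Fin.snoc_last, MvPolynomial.eval_rename,
      Polynomial.eval_mul, Polynomial.eval_pow, Polynomial.eval_C, Polynomial.eval_X]
    have : (Fin.snoc b t : Fin (n + 1) → K) ∘ Fin.castSucc = b := by
      funext x
      simp
    rw [this]
  have hroot : ∀ t : K, (∃ mu' ∈ F, IsMultPartition K (t ::ₘ M) mu') →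
      Polynomial.eval t h = 0 := by
    intro t ht
    rw [hevalh t]
    apply hfJ (Fin.snoc b t)
    rwa [lamL_snoc, ← hM]
  have hdeg : h.natDegree ≤ d := by
    rw [hh]
    apply Polynomial.natDegree_sum_le_of_forall_le
    intro j hj
    refine le_trans (Polynomial.natDegree_C_mul_le _ _) ?_
    rw [Polynomial.natDegree_X_pow]
    exact Nat.lt_succ_iff.mp (Finset.mem_range.mp hj)
  -- main claim: h = 0
  have hzero : h = 0 := by
    by_cases hA : d + 1 ≤ L.length
    · -- case A: at least d+1 parts
      have hcdL : L.getD d 0 ∈ L := by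
        rw [List.getD_eq_getElem L 0 (by omega)]
        exact List.getElem_mem _
      set cd := L.getD d 0 with hcd
      have hnuparts : nu.parts = incFirst cd L := by
        have hperm : (↑nu.parts : Multiset ℕ) = ↑(incFirst cd L) := by
          rw [hnu]
          unfold addBoxMultiset
          rw [if_pos hA, incFirst_coe cd L hcdL]
          simp only [Nat.add_sub_cancel, ← hLdef, ← hcd]
          rw [add_comm, Multiset.singleton_add]
        exact List.Perm.eq_of_pairwise (fun a b _ _ h1 h2 => le_antisymm h2 h1) nu.sorted
          (incFirst_sorted hLs) (Multiset.coe_eq_coe.mp hperm)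
      -- the set of good values
      set Sd := M.toFinset.filter (fun v => M.count v ∈ L.take (d + 1)) with hSd
      have hSdroot : ∀ v ∈ Sd, Polynomial.eval v h = 0 := by
        intro v hv
        rw [hSd, Finset.mem_filter] at hv
        obtain ⟨hvFin, hcmem⟩ := hv
        set c := M.count v with hcdef
        have hcL : c ∈ L := List.mem_of_mem_take hcmem
        have hvM : v ∈ M := Multiset.mem_toFinset.mp hvFin
        refine hroot v ⟨⟨incFirst c L, incFirst_sorted hLs, ?_, ?_⟩, ?_, ?_⟩
        · intro p hp
          rcases mem_incFirst hp with h' | h'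
          · omega
          · exact mu.pos p h'
        · rw [incFirst_sum c L hcL, hLsum]
          omega
        · -- membership in F via the upper-filter property
          apply hFup nu hnuF
          · -- l ≤ partOne
            refine le_trans hmul ?_
            exact headD_le_incFirst c L
          · -- dominance
            intro idx
            rw [hnuparts]
            show ((incFirst cd L).take idx).sum ≤ ((incFirst c L).take idx).sum
            rw [take_sum_incFirst, take_sum_incFirst]
            have hge : cd ≤ c := getD_le_of_mem_take hLs hcmem (by omega)
            by_cases hct : cd ∈ L.take idx
            · have := mem_take_of_ge hLs hcL hct hge
              simp [hct, this]
            · simp only [if_neg hct]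
              split <;> omega
        · -- the multiplicity partition of the extended point
          show (↑(incFirst c L) : Multiset ℕ) = _
          have htf : (v ::ₘ M).toFinset = M.toFinset := by
            rw [Multiset.toFinset_cons, Finset.insert_eq_self.mpr hvFin]
          have hvval : v ∈ M.toFinset.val := hvFin
          have hsplit : v ::ₘ (M.toFinset.val.erase v) = M.toFinset.val :=
            Multiset.cons_erase hvval
          have hnotmem : v ∉ M.toFinset.val.erase v :=
            fun hx => M.toFinset.nodup.notMem_erase hx
          calc (↑(incFirst c L) : Multiset ℕ)
              = (c + 1) ::ₘ ((↑L : Multiset ℕ).erase c) := incFirst_coe c L hcL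
            _ = (c + 1) ::ₘ (M.toFinset.val.erase v).map (fun α => M.count α) := by
                congr 1
                rw [hmp']
                conv_lhs => rw [← hsplit]
                rw [Multiset.map_cons, ← hcdef, Multiset.erase_cons_head]
            _ = (c + 1) ::ₘ (M.toFinset.val.erase v).map (fun α => (v ::ₘ M).count α) := by
                congr 1
                apply Multiset.map_congr rfl
                intro w hw
                have hwv : w ≠ v := fun e => hnotmem (e ▸ hw)
                rw [Multiset.count_cons_of_ne hwv]
            _ = (v ::ₘ M).toFinset.val.map (fun α => (v ::ₘ M).count α) := by
                rw [htf]
                conv_rhs => rw [← hsplit]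
                rw [Multiset.map_cons, Multiset.count_cons_self, ← hcdef]
      -- cardinality of Sd
      have hSdcard : d + 1 ≤ Sd.card := by
        have h1 : Sd.card =
            Multiset.countP (fun x => x ∈ L.take (d + 1)) (↑L : Multiset ℕ) := by
          rw [hmp', Multiset.countP_map, hSd, Finset.card_def, Finset.filter_val]
        rw [h1, Multiset.coe_countP]
        have h2 : (L.take (d + 1)).countP (fun x => decide (x ∈ L.take (d + 1))) ≤
            L.countP (fun x => decide (x ∈ L.take (d + 1))) :=
          (List.take_sublist (d + 1) L).countP_le
        have h3 : (L.take (d + 1)).countP (fun x => decide (x ∈ L.take (d + 1))) =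
            (L.take (d + 1)).length := by
          rw [List.countP_eq_length]
          intro a ha
          simpa using ha
        rw [h3, List.length_take] at h2
        omega
      -- h has too many roots
      by_contra hne
      have hsub : Sd ⊆ h.roots.toFinset := by
        intro v hv
        rw [Multiset.mem_toFinset, Polynomial.mem_roots']
        exact ⟨hne, hSdroot v hv⟩
      have hc1 := Finset.card_le_card hsub
      have hc2 := h.roots.toFinset_card_le
      have hc3 := Polynomial.card_roots' h
      omega
    · -- case B: fewer than d+1 parts; all new values work
      apply Polynomial.eq_zero_of_infinite_isRoot
      apply Set.Infinite.mono _ ((M.toFinset : Set K).toFinite.infinite_compl)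
      intro t ht
      simp only [Set.mem_compl_iff, Finset.mem_coe, Multiset.mem_toFinset] at ht
      show Polynomial.IsRoot h t
      apply hroot t
      refine ⟨nu, hnuF, ?_⟩
      show (↑nu.parts : Multiset ℕ) = _
      rw [hnu]
      unfold addBoxMultiset
      rw [if_neg hA]
      have htf : (t ::ₘ M).toFinset = insert t M.toFinset := Multiset.toFinset_cons t M
      have htnot : t ∉ M.toFinset := fun hx => ht (Multiset.mem_toFinset.mp hx)
      rw [htf, Finset.insert_val_of_notMem htnot, Multiset.map_cons,
        Multiset.count_cons_self, Multiset.count_eq_zero_of_notMem ht]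
      have : (M.toFinset.val).map (fun α => (t ::ₘ M).count α) =
          (M.toFinset.val).map (fun α => M.count α) := by
        apply Multiset.map_congr rfl
        intro w hw
        have hwt : w ≠ t := fun e => htnot (e ▸ hw)
        rw [Multiset.count_cons_of_ne hwt]
      rw [this, ← hmp', ← hLdef, add_comm, Multiset.singleton_add]
  -- conclude
  have hco : MvPolynomial.eval b (g i) = h.coeff i := by
    rw [hh, Polynomial.finset_sum_coeff]
    simp only [Polynomial.coeff_C_mul, Polynomial.coeff_X_pow]
    rw [Finset.sum_eq_single i]
    · simp
    · intro j _ hji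
      simp [Ne.symm hji]
    · intro habs
      exact absurd (Finset.mem_range.mpr (Nat.lt_succ_of_le hid)) habs
  rw [hco, hzero, Polynomial.coeff_zero]


end SpechtLL
end

section
/- Let λ ∈ [P_{n+l−1}]_{≥l} and let F = {ρ ∈ [P_{n+l−1}]_{≥l} : ρ ⊴ λ}. For μ ∈ P_{n−1}, if the set X := ⟨μ⟩^l ∩ F is nonempty, then there exists an element λ̃ ∈ X such that w_μ(ρ) > w_μ(λ̃) for every ρ ∈ X with ρ ≠ λ̃ (i.e. λ̃ is the unique minimizer of w_μ on X, with strict inequality). -/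
open MvPolynomial

namespace SpechtLL

variable (K : Type*) [Field K]

section Aux
open Finset

/-! ### Basic list/partition lemmas -/

lemma countP_lt_iff_getD (L : List ℕ) (hs : L.Pairwise (· ≥ ·)) (i j : ℕ) :
    i < L.countP (fun p => decide (j < p)) ↔ j < L.getD i 0 := by
  induction L generalizing i with
  | nil => simp
  | cons a t ih =>
    rw [List.pairwise_cons] at hs
    by_cases hja : j < a
    · rw [List.countP_cons_of_pos (by simpa using hja)]
      cases i with
      | zero => simp [List.getD_cons_zero, hja]
      | succ i =>
        rw [List.getD_cons_succ]
        have := ih hs.2 i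
        omega
    · rw [List.countP_cons_of_neg (by simpa using hja)]
      have hz : t.countP (fun p => decide (j < p)) = 0 := by
        rw [List.countP_eq_zero]
        intro x hx
        have := hs.1 x hx
        simp only [decide_eq_true_eq]
        omega
      cases i with
      | zero => rw [List.getD_cons_zero]; omega
      | succ i =>
        rw [List.getD_cons_succ]
        have := ih hs.2 i
        omega

variable {N : ℕ}

lemma lt_colLen_iff (ρ : Partition N) (i j : ℕ) :
    i < colLen ρ j ↔ j < ρ.parts.getD i 0 :=
  countP_lt_iff_getD _ ρ.sorted i j

lemma colLen_anti (ρ : Partition N) {j j' : ℕ} (h : j ≤ j') : colLen ρ j' ≤ colLen ρ j := by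
  rcases Nat.eq_zero_or_pos (colLen ρ j') with h0 | h0
  · omega
  · have h1 := (lt_colLen_iff ρ (colLen ρ j' - 1) j').1 (by omega)
    have h2 := (lt_colLen_iff ρ (colLen ρ j' - 1) j).2 (by omega)
    omega

lemma getD_anti (ρ : Partition N) {i i' : ℕ} (h : i ≤ i') :
    ρ.parts.getD i' 0 ≤ ρ.parts.getD i 0 := by
  rcases Nat.eq_zero_or_pos (ρ.parts.getD i' 0) with h0 | h0
  · omega
  · have h1 := (lt_colLen_iff ρ i' (ρ.parts.getD i' 0 - 1)).2 (by omega)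
    have h2 := (lt_colLen_iff ρ i (ρ.parts.getD i' 0 - 1)).1 (by omega)
    omega

lemma partOne_eq_getD (ρ : Partition N) : partOne ρ = ρ.parts.getD 0 0 := by
  cases h : ρ.parts <;> simp [partOne, h]

lemma getD_le_partOne (ρ : Partition N) (i : ℕ) : ρ.parts.getD i 0 ≤ partOne ρ := by
  rw [partOne_eq_getD]; exact getD_anti ρ (Nat.zero_le i)

lemma length_le_sum (ρ : Partition N) : ρ.parts.length ≤ N := by
  have h : ∀ L : List ℕ, (∀ p ∈ L, 0 < p) → L.length ≤ L.sum := by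
    intro L
    induction L with
    | nil => simp
    | cons a t ih =>
      intro h
      have h1 := ih (fun p hp => h p (List.mem_cons_of_mem _ hp))
      have h2 := h a List.mem_cons_self
      simp only [List.length_cons, List.sum_cons]
      omega
  have h2 := h ρ.parts ρ.pos
  rw [ρ.sum_eq] at h2
  exact h2

lemma partOne_le (ρ : Partition N) : partOne ρ ≤ N := by
  have hs := ρ.sum_eq
  cases h : ρ.parts with
  | nil => simp [partOne, h]
  | cons a t =>
    rw [h] at hs
    simp only [partOne, h, List.headD_cons]
    simp only [List.sum_cons] at hs
    omega

lemma colLen_le_length_s9 (ρ : Partition N) (j : ℕ) : colLen ρ j ≤ ρ.parts.length :=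
  List.countP_le_length

lemma colLen_le (ρ : Partition N) (j : ℕ) : colLen ρ j ≤ N :=
  le_trans (colLen_le_length_s9 ρ j) (length_le_sum ρ)

lemma colLen_eq_zero (ρ : Partition N) {j : ℕ} (h : partOne ρ ≤ j) : colLen ρ j = 0 := by
  by_contra h0
  have := (lt_colLen_iff ρ 0 j).1 (by omega)
  rw [← partOne_eq_getD] at this
  omega

lemma colLen_zero_pos (ρ : Partition N) {j : ℕ} (h : 0 < colLen ρ j) : j < partOne ρ := by
  have := (lt_colLen_iff ρ 0 j).1 h
  rw [← partOne_eq_getD] at this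
  omega

end Aux

section Aux2
open Finset

variable {N : ℕ}

/-- Column partial sums. -/
def cc (ρ : Partition N) (m : ℕ) : ℕ := ∑ j ∈ Finset.range m, colLen ρ j

lemma cc_succ (ρ : Partition N) (m : ℕ) : cc ρ (m + 1) = cc ρ m + colLen ρ m :=
  Finset.sum_range_succ _ _

lemma cc_mono (ρ : Partition N) {m m' : ℕ} (h : m ≤ m') : cc ρ m ≤ cc ρ m' :=
  Finset.sum_le_sum_of_subset (Finset.range_subset_range.2 h)

lemma filter_lt_card (mm c : ℕ) : ((Finset.range mm).filter (fun j => j < c)).card = min c mm := by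
  have h : (Finset.range mm).filter (fun j => j < c) = Finset.range (min c mm) := by
    ext x
    simp only [Finset.mem_filter, Finset.mem_range]
    omega
  rw [h, Finset.card_range]

lemma sum_ite_lt (mm c : ℕ) : (∑ j ∈ Finset.range mm, if j < c then 1 else 0) = min c mm := by
  rw [← Finset.card_filter, filter_lt_card]

lemma sum_nat_tsub {α : Type*} (s : Finset α) (f g : α → ℕ) (h : ∀ a ∈ s, g a ≤ f a) :
    ∑ a ∈ s, (f a - g a) = ∑ a ∈ s, f a - ∑ a ∈ s, g a := by
  classical
  induction s using Finset.induction with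
  | empty => simp
  | @insert x s hx ih =>
    rw [Finset.sum_insert hx, Finset.sum_insert hx, Finset.sum_insert hx,
      ih (fun a ha => h a (Finset.mem_insert_of_mem ha))]
    have h1 := h x (Finset.mem_insert_self _ _)
    have h2 : ∑ a ∈ s, g a ≤ ∑ a ∈ s, f a :=
      Finset.sum_le_sum (fun a ha => h a (Finset.mem_insert_of_mem ha))
    omega

lemma take_sum (L : List ℕ) (k : ℕ) : (L.take k).sum = ∑ i ∈ Finset.range k, L.getD i 0 := by
  induction k generalizing L with
  | zero => simp
  | succ k ih =>
    cases L with
    | nil => simp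
    | cons a t =>
      rw [List.take_succ_cons, List.sum_cons, Finset.sum_range_succ' (fun i => (a :: t).getD i 0) k]
      simp only [List.getD_cons_succ, List.getD_cons_zero]
      rw [ih t]
      omega

lemma sum_getD (ρ : Partition N) {K : ℕ} (h : ρ.parts.length ≤ K) :
    ∑ i ∈ Finset.range K, ρ.parts.getD i 0 = N := by
  rw [← take_sum, List.take_of_length_le h, ρ.sum_eq]

lemma cc_eq_sum_min (ρ : Partition N) (m K : ℕ) (hK : ρ.parts.length ≤ K) :
    cc ρ m = ∑ i ∈ Finset.range K, min (ρ.parts.getD i 0) m := by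
  unfold cc
  have h1 : ∀ j, colLen ρ j = ∑ i ∈ Finset.range K, if i < colLen ρ j then 1 else 0 := by
    intro j
    rw [sum_ite_lt]
    have := colLen_le_length_s9 ρ j
    omega
  calc ∑ j ∈ range m, colLen ρ j
      = ∑ j ∈ range m, ∑ i ∈ range K, if i < colLen ρ j then 1 else 0 :=
        Finset.sum_congr rfl fun j _ => h1 j
    _ = ∑ i ∈ range K, ∑ j ∈ range m, if i < colLen ρ j then 1 else 0 := Finset.sum_comm
    _ = ∑ i ∈ range K, ∑ j ∈ range m, if j < ρ.parts.getD i 0 then 1 else 0 := by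
        refine Finset.sum_congr rfl fun i _ => Finset.sum_congr rfl fun j _ => ?_
        exact if_congr (lt_colLen_iff ρ i j) rfl rfl
    _ = ∑ i ∈ range K, min (ρ.parts.getD i 0) m := by
        refine Finset.sum_congr rfl fun i _ => ?_
        rw [sum_ite_lt]

lemma rr_eq_sum_min (ρ : Partition N) (k B : ℕ) (hB : partOne ρ ≤ B) :
    (ρ.parts.take k).sum = ∑ j ∈ Finset.range B, min (colLen ρ j) k := by
  rw [take_sum]
  have h1 : ∀ i, ρ.parts.getD i 0 = ∑ j ∈ Finset.range B, if j < ρ.parts.getD i 0 then 1 else 0 := by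
    intro i
    rw [sum_ite_lt]
    have := getD_le_partOne ρ i
    omega
  calc ∑ i ∈ range k, ρ.parts.getD i 0
      = ∑ i ∈ range k, ∑ j ∈ range B, if j < ρ.parts.getD i 0 then 1 else 0 :=
        Finset.sum_congr rfl fun i _ => h1 i
    _ = ∑ j ∈ range B, ∑ i ∈ range k, if j < ρ.parts.getD i 0 then 1 else 0 := Finset.sum_comm
    _ = ∑ j ∈ range B, ∑ i ∈ range k, if i < colLen ρ j then 1 else 0 := by
        refine Finset.sum_congr rfl fun j _ => Finset.sum_congr rfl fun i _ => ?_
        exact if_congr (lt_colLen_iff ρ i j).symm rfl rfl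
    _ = ∑ j ∈ range B, min (colLen ρ j) k := by
        refine Finset.sum_congr rfl fun j _ => ?_
        rw [sum_ite_lt]

lemma cc_total (ρ : Partition N) {m : ℕ} (h : partOne ρ ≤ m) : cc ρ m = N := by
  rw [cc_eq_sum_min ρ m ρ.parts.length le_rfl]
  refine Eq.trans (Finset.sum_congr rfl fun i _ => ?_) (sum_getD ρ le_rfl)
  have := getD_le_partOne ρ i
  omega

lemma cc_le (ρ : Partition N) (m : ℕ) : cc ρ m ≤ N := by
  have h1 := cc_mono ρ (le_max_left m (partOne ρ))
  have h2 := cc_total ρ (le_max_right m (partOne ρ))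
  omega

/-- The key inequality transfer for dominance duality. -/
lemma keyIneq (B k : ℕ) (u v v' : ℕ → ℕ)
    (hGal : ∀ i j, i < v j ↔ j < v' i) (hB : v' k ≤ B)
    (hps : ∑ j ∈ Finset.range (v' k), v j ≤ ∑ j ∈ Finset.range (v' k), u j) :
    ∑ j ∈ Finset.range B, (v j - k) ≤ ∑ j ∈ Finset.range B, (u j - k) := by
  set s := v' k with hs
  have h1 : ∀ j, s ≤ j → v j - k = 0 := by
    intro j hj
    have := (hGal k j).not
    simp only [not_lt] at this
    have := this.2 (by omega)
    omega
  have h2 : ∀ j < s, k ≤ v j := by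
    intro j hj
    have := (hGal k j).2 hj
    omega
  have e1 : ∑ j ∈ Finset.range B, (v j - k) = ∑ j ∈ Finset.range s, (v j - k) := by
    rw [Finset.sum_subset (Finset.range_subset_range.2 hB)]
    intro x hx hxn
    simp only [Finset.mem_range] at hxn
    exact h1 x (by omega)
  rw [e1, sum_nat_tsub _ _ _ (fun j hj => h2 j (Finset.mem_range.1 hj))]
  have e2 : ∑ j ∈ Finset.range s, (k : ℕ) = s * k := by
    simp [Finset.sum_const, mul_comm]
  calc ∑ j ∈ Finset.range s, v j - ∑ j ∈ Finset.range s, k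
      ≤ ∑ j ∈ Finset.range s, u j - ∑ j ∈ Finset.range s, k := by
        have : ∑ j ∈ Finset.range s, (k:ℕ) ≤ ∑ j ∈ Finset.range s, v j :=
          Finset.sum_le_sum (fun j hj => h2 j (Finset.mem_range.1 hj))
        omega
    _ ≤ ∑ j ∈ Finset.range s, (u j - k) := by
        have h3 : ∑ j ∈ Finset.range s, u j ≤ ∑ j ∈ Finset.range s, ((u j - k) + k) :=
          Finset.sum_le_sum (fun j _ => by omega)
        rw [Finset.sum_add_distrib] at h3
        omega
    _ ≤ ∑ j ∈ Finset.range B, (u j - k) :=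
        Finset.sum_le_sum_of_subset (Finset.range_subset_range.2 hB)

/-- Dominance order in terms of column partial sums. -/
lemma dom_iff_cc (ρ τ : Partition N) : domLE ρ τ ↔ ∀ m, cc τ m ≤ cc ρ m := by
  constructor
  · intro hdom m
    have hKρ : ρ.parts.length ≤ N := length_le_sum ρ
    have hKτ : τ.parts.length ≤ N := length_le_sum τ
    have hmin : ∀ (σ : Partition N), cc σ m = N - ∑ i ∈ Finset.range N, (σ.parts.getD i 0 - m) := by
      intro σ
      rw [cc_eq_sum_min σ m N (length_le_sum σ)]
      have h1 : ∀ i ∈ Finset.range N, (σ.parts.getD i 0 - m) ≤ σ.parts.getD i 0 := fun i _ => by omega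
      have h2 : ∑ i ∈ Finset.range N, (σ.parts.getD i 0 - (σ.parts.getD i 0 - m))
          = ∑ i ∈ Finset.range N, σ.parts.getD i 0 - ∑ i ∈ Finset.range N, (σ.parts.getD i 0 - m) :=
        sum_nat_tsub _ _ _ h1
      rw [sum_getD σ (length_le_sum σ)] at h2
      rw [← h2]
      refine Finset.sum_congr rfl fun i _ => ?_
      omega
    rw [hmin ρ, hmin τ]
    have key : ∑ i ∈ Finset.range N, (ρ.parts.getD i 0 - m)
        ≤ ∑ i ∈ Finset.range N, (τ.parts.getD i 0 - m) := by
      refine keyIneq N m (fun i => τ.parts.getD i 0) (fun i => ρ.parts.getD i 0)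
        (fun i => colLen ρ i) ?_ ?_ ?_
      · intro i j
        exact (lt_colLen_iff ρ j i).symm
      · exact le_trans (colLen_le_length_s9 ρ m) hKρ
      · rw [← take_sum, ← take_sum]
        exact hdom _
    have hle1 := Finset.sum_le_sum (fun i (_ : i ∈ Finset.range N) =>
      (by omega : ρ.parts.getD i 0 - m ≤ ρ.parts.getD i 0))
    have hs1 := sum_getD ρ hKρ
    omega
  · intro hcc k
    
    have hBρ : partOne ρ ≤ N := partOne_le ρ
    have hBτ : partOne τ ≤ N := partOne_le τ
    have hmin : ∀ (σ : Partition N), partOne σ ≤ N →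
        (σ.parts.take k).sum = N - ∑ j ∈ Finset.range N, (colLen σ j - k) := by
      intro σ hσ
      rw [rr_eq_sum_min σ k N hσ]
      have h1 : ∀ j ∈ Finset.range N, (colLen σ j - k) ≤ colLen σ j := fun j _ => by omega
      have h2 : ∑ j ∈ Finset.range N, (colLen σ j - (colLen σ j - k))
          = ∑ j ∈ Finset.range N, colLen σ j - ∑ j ∈ Finset.range N, (colLen σ j - k) :=
        sum_nat_tsub _ _ _ h1
      have h3 : (∑ j ∈ Finset.range N, colLen σ j) = N := cc_total σ hσ
      rw [h3] at h2
      rw [← h2]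
      refine Finset.sum_congr rfl fun j _ => ?_
      omega
    rw [hmin ρ hBρ, hmin τ hBτ]
    have key : ∑ j ∈ Finset.range N, (colLen τ j - k)
        ≤ ∑ j ∈ Finset.range N, (colLen ρ j - k) := by
      refine keyIneq N k (fun j => colLen ρ j) (fun j => colLen τ j)
        (fun i => τ.parts.getD i 0) ?_ ?_ ?_
      · intro i j
        exact lt_colLen_iff τ i j
      · exact le_trans (getD_le_partOne τ k) hBτ
      · exact hcc _
    have hle1 := Finset.sum_le_sum (fun j (_ : j ∈ Finset.range N) =>
      (by omega : colLen τ j - k ≤ colLen τ j))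
    have hle2 := Finset.sum_le_sum (fun j (_ : j ∈ Finset.range N) =>
      (by omega : colLen ρ j - k ≤ colLen ρ j))
    have h3 : (∑ j ∈ Finset.range N, colLen τ j) = N := cc_total τ hBτ
    have h4 : (∑ j ∈ Finset.range N, colLen ρ j) = N := cc_total ρ hBρ
    omega

lemma eq_of_parts_eq {ρ τ : Partition N} (h : ρ.parts = τ.parts) : ρ = τ := by
  cases ρ; cases τ; simp_all

lemma nat_eq_of_lt_iff {a b : ℕ} (h : ∀ j, j < a ↔ j < b) : a = b := by
  by_contra hne
  rcases Nat.lt_or_ge a b with hab | hab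
  · exact absurd ((h a).2 hab) (lt_irrefl a)
  · have : a ≠ b := hne
    have hba : b < a := by omega
    exact absurd ((h b).1 hba) (lt_irrefl b)

lemma ext_colLen {ρ τ : Partition N} (h : ∀ j, colLen ρ j = colLen τ j) : ρ = τ := by
  have hgetD : ∀ i, ρ.parts.getD i 0 = τ.parts.getD i 0 := by
    intro i
    refine nat_eq_of_lt_iff fun j => ?_
    rw [← lt_colLen_iff, ← lt_colLen_iff, h j]
  have hlen : ρ.parts.length = τ.parts.length := by
    have h1 : colLen ρ 0 = ρ.parts.length := by
      unfold colLen
      rw [List.countP_eq_length]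
      intro a ha
      simpa using ρ.pos a ha
    have h2 : colLen τ 0 = τ.parts.length := by
      unfold colLen
      rw [List.countP_eq_length]
      intro a ha
      simpa using τ.pos a ha
    rw [← h1, ← h2, h 0]
  refine eq_of_parts_eq (List.ext_getElem hlen fun i h1 h2 => ?_)
  have := hgetD i
  rwa [List.getD_eq_getElem ρ.parts 0 h1, List.getD_eq_getElem τ.parts 0 h2] at this

end Aux2

section Aux3
open Finset

lemma map_range_sum (f : ℕ → ℕ) (K : ℕ) :
    ((List.range K).map f).sum = ∑ i ∈ Finset.range K, f i := by
  induction K with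
  | zero => simp
  | succ K ih =>
    rw [List.range_succ, List.map_append, List.sum_append, Finset.sum_range_succ, ih]
    simp

lemma countP_range (q : ℕ → Prop) [DecidablePred q] (K : ℕ) :
    (List.range K).countP (fun i => decide (q i)) = ((Finset.range K).filter q).card := by
  induction K with
  | zero => simp
  | succ K ih =>
    rw [List.range_succ, List.countP_append, Finset.range_add_one, Finset.filter_insert]
    by_cases hq : q K
    · rw [if_pos hq, Finset.card_insert_of_notMem (by simp)]
      simp [hq, ih]
    · rw [if_neg hq]
      simp [hq, ih]

lemma dc_mem_iff (S : Finset ℕ) (hdc : ∀ a b : ℕ, a ≤ b → b ∈ S → a ∈ S) (x : ℕ) :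
    x ∈ S ↔ x < S.card := by
  constructor
  · intro hx
    have hsub : Finset.range (x + 1) ⊆ S := fun y hy =>
      hdc y x (by simpa [Nat.lt_succ_iff] using Finset.mem_range.1 hy) hx
    have := Finset.card_le_card hsub
    rw [Finset.card_range] at this
    omega
  · intro hx
    by_contra hxS
    have hsub : S ⊆ Finset.range x := by
      intro y hy
      rcases Nat.lt_or_ge y x with h | h
      · simpa [Finset.mem_range] using h
      · exact absurd (hdc x y h hy) hxS
    have := Finset.card_le_card hsub
    rw [Finset.card_range] at this
    omega

lemma exists_partition_of_cols (Nv B0 : ℕ) (c : ℕ → ℕ)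
    (hanti : ∀ j j' : ℕ, j ≤ j' → c j' ≤ c j)
    (hsupp : ∀ j, B0 ≤ j → c j = 0)
    (hsum : ∑ j ∈ Finset.range B0, c j = Nv) :
    ∃ σ : Partition Nv, ∀ j, colLen σ j = c j := by
  classical
  set S : ℕ → Finset ℕ := fun i => (Finset.range B0).filter (fun j => i < c j) with hS
  set f : ℕ → ℕ := fun i => (S i).card with hf
  have hdc : ∀ i, ∀ a b : ℕ, a ≤ b → b ∈ S i → a ∈ S i := by
    intro i a b hab hb
    simp only [hS, Finset.mem_filter, Finset.mem_range] at hb ⊢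
    have := hanti a b hab
    exact ⟨by omega, by omega⟩
  have hmem : ∀ i x, x ∈ S i ↔ x < f i := fun i x => dc_mem_iff (S i) (hdc i) x
  have hmem' : ∀ i x, (x < B0 ∧ i < c x) ↔ x < f i := by
    intro i x
    rw [← hmem i x]
    simp [hS]
  have hfanti : ∀ i i' : ℕ, i ≤ i' → f i' ≤ f i := by
    intro i i' h
    refine Finset.card_le_card fun x hx => ?_
    simp only [hS, Finset.mem_filter, Finset.mem_range] at hx ⊢
    exact ⟨hx.1, by omega⟩
  refine ⟨⟨(List.range (c 0)).map f, ?_, ?_, ?_⟩, ?_⟩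
  · exact List.Pairwise.map f (fun a b hab => hfanti a b (le_of_lt hab)) List.pairwise_lt_range
  · intro p hp
    simp only [List.mem_map, List.mem_range] at hp
    obtain ⟨i, hi, rfl⟩ := hp
    have hc0 : 0 < B0 := by
      by_contra h
      have := hsupp 0 (by omega)
      omega
    have h0 : 0 ∈ S i := by
      simp only [hS, Finset.mem_filter, Finset.mem_range]
      exact ⟨hc0, hi⟩
    exact Finset.card_pos.2 ⟨0, h0⟩
  · rw [map_range_sum]
    have h1 : ∀ i ∈ Finset.range (c 0), f i = ∑ j ∈ Finset.range B0, if i < c j then 1 else 0 := by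
      intro i _
      rw [hf]
      exact Finset.card_filter _ _
    rw [Finset.sum_congr rfl h1, Finset.sum_comm, ← hsum]
    refine Finset.sum_congr rfl fun j hj => ?_
    rw [sum_ite_lt]
    have := hanti 0 j (Nat.zero_le j)
    omega
  · intro j
    show ((List.range (c 0)).map f).countP (fun p => decide (j < p)) = c j
    rw [List.countP_map]
    have heq : ((fun p => decide (j < p)) ∘ f) = fun i => decide (j < f i) := rfl
    rw [heq, countP_range (fun i => j < f i) (c 0)]
    by_cases hjB : j < B0
    · have hfe : (Finset.range (c 0)).filter (fun i => j < f i)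
          = (Finset.range (c 0)).filter (fun i => i < c j) := by
        ext i
        simp only [Finset.mem_filter, Finset.mem_range]
        constructor
        · rintro ⟨h1, h2⟩
          exact ⟨h1, ((hmem' i j).2 h2).2⟩
        · rintro ⟨h1, h2⟩
          exact ⟨h1, (hmem' i j).1 ⟨hjB, h2⟩⟩
      rw [hfe, filter_lt_card]
      have := hanti 0 j (Nat.zero_le j)
      omega
    · have hcj : c j = 0 := hsupp j (by omega)
      have hfe : (Finset.range (c 0)).filter (fun i => j < f i) = ∅ := by
        refine Finset.filter_eq_empty_iff.2 fun i _ => ?_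
        intro h2
        have := ((hmem' i j).2 h2).1
        omega
      rw [hfe, hcj]
      simp

/-- Dominance join of two strips over mu. -/
lemma join_strip {n l : ℕ} (mu : Partition (n - 1)) (ρ τ : Partition (n + l - 1))
    (hsρ : ∀ j, colLen mu j ≤ colLen ρ j ∧ colLen ρ j ≤ colLen mu j + 1)
    (hsτ : ∀ j, colLen mu j ≤ colLen τ j ∧ colLen τ j ≤ colLen mu j + 1) :
    ∃ σ : Partition (n + l - 1),
      (∀ j, colLen mu j ≤ colLen σ j ∧ colLen σ j ≤ colLen mu j + 1) ∧
      ∀ m, cc σ m = min (cc ρ m) (cc τ m) := by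
  set E : ℕ → ℕ := fun m => min (cc ρ m) (cc τ m) with hE
  set c : ℕ → ℕ := fun j => E (j + 1) - E j with hc
  have hEmono : ∀ m m' : ℕ, m ≤ m' → E m ≤ E m' := by
    intro m m' h
    have h1 := cc_mono ρ h
    have h2 := cc_mono τ h
    simp only [hE]
    omega
  have htel : ∀ m, ∑ j ∈ Finset.range m, c j = E m := by
    intro m
    induction m with
    | zero => simp [hE, cc]
    | succ m ih =>
      rw [Finset.sum_range_succ, ih]
      have := hEmono m (m + 1) (by omega)
      simp only [hc]
      omega
  have hkey : ∀ j, colLen mu j ≤ c j ∧ c j ≤ colLen mu j + 1 := by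
    intro j
    have h1 := cc_succ ρ j
    have h2 := cc_succ τ j
    have h3 := hsρ j
    have h4 := hsτ j
    simp only [hc, hE]
    omega
  have hanti : ∀ j j' : ℕ, j ≤ j' → c j' ≤ c j := by
    have hstep : ∀ j, c (j + 1) ≤ c j := by
      intro j
      have h1 := cc_succ ρ j
      have h2 := cc_succ τ j
      have h3 := cc_succ ρ (j + 1)
      have h4 := cc_succ τ (j + 1)
      have h5 := colLen_anti ρ (by omega : j ≤ j + 1)
      have h6 := colLen_anti τ (by omega : j ≤ j + 1)
      simp only [hc, hE]
      omega
    have hd : ∀ j d, c (j + d) ≤ c j := by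
      intro j d
      induction d with
      | zero => simp
      | succ d ih => exact le_trans (hstep (j + d)) ih
    intro j j' h
    have h2 := hd j (j' - j)
    rwa [show j + (j' - j) = j' by omega] at h2
  have hsupp : ∀ j, n + l - 1 ≤ j → c j = 0 := by
    intro j hj
    have h1 : cc ρ (j + 1) = n + l - 1 := cc_total ρ (by have := partOne_le ρ; omega)
    have h2 : cc ρ j = n + l - 1 := cc_total ρ (by have := partOne_le ρ; omega)
    have h3 : cc τ (j + 1) = n + l - 1 := cc_total τ (by have := partOne_le τ; omega)
    have h4 : cc τ j = n + l - 1 := cc_total τ (by have := partOne_le τ; omega)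
    simp only [hc, hE, h1, h2, h3, h4]
    omega
  have hsum : ∑ j ∈ Finset.range (n + l - 1), c j = n + l - 1 := by
    rw [htel]
    have h1 : cc ρ (n + l - 1) = n + l - 1 := cc_total ρ (partOne_le ρ)
    have h2 : cc τ (n + l - 1) = n + l - 1 := cc_total τ (partOne_le τ)
    simp only [hE, h1, h2]
    omega
  obtain ⟨σ, hσ⟩ := exists_partition_of_cols (n + l - 1) (n + l - 1) c hanti hsupp hsum
  refine ⟨σ, fun j => by rw [hσ j]; exact hkey j, fun m => ?_⟩
  show cc σ m = E m
  rw [← htel m]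
  exact Finset.sum_congr rfl fun j _ => hσ j

/-- The w-statistic as a function of the shape. -/
def fval (n l : ℕ) (mu : Partition (n - 1)) (ρ : Partition (n + l - 1)) : ℕ :=
  ∑ j ∈ Finset.range (n + l), colLen mu j * (colLen ρ j - colLen mu j)

lemma fval_eq (n l : ℕ) (mu : Partition (n - 1)) (ρ : Partition (n + l - 1))
    (hs : ∀ j, colLen mu j ≤ colLen ρ j ∧ colLen ρ j ≤ colLen mu j + 1) :
    fval n l mu ρ = ∑ i ∈ Finset.range n,
      (cc ρ (mu.parts.getD i 0) - cc mu (mu.parts.getD i 0)) := by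
  unfold fval
  have h1 : ∀ j, colLen mu j * (colLen ρ j - colLen mu j)
      = ∑ i ∈ Finset.range n, if i < colLen mu j then (colLen ρ j - colLen mu j) else 0 := by
    intro j
    rw [← Finset.sum_filter, Finset.sum_const, filter_lt_card, smul_eq_mul]
    have := colLen_le mu j
    have hmin : min (colLen mu j) n = colLen mu j := by omega
    rw [hmin]
  rw [Finset.sum_congr rfl fun j _ => h1 j, Finset.sum_comm]
  refine Finset.sum_congr rfl fun i _ => ?_
  have hset : (Finset.range (n + l)).filter (fun j => i < colLen mu j)
      = Finset.range (mu.parts.getD i 0) := by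
    ext j
    simp only [Finset.mem_filter, Finset.mem_range]
    rw [lt_colLen_iff mu i j]
    have h2 := getD_le_partOne mu i
    have h3 := partOne_le mu
    omega
  rw [← Finset.sum_filter, hset, sum_nat_tsub _ _ _ (fun j _ => (hs j).1)]
  rfl

lemma fval_anti (n l : ℕ) (hn : 0 < n) (mu : Partition (n - 1)) (ρ τ : Partition (n + l - 1))
    (hsρ : ∀ j, colLen mu j ≤ colLen ρ j ∧ colLen ρ j ≤ colLen mu j + 1)
    (hsτ : ∀ j, colLen mu j ≤ colLen τ j ∧ colLen τ j ≤ colLen mu j + 1)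
    (hcc : ∀ m, cc ρ m ≤ cc τ m) :
    fval n l mu ρ ≤ fval n l mu τ ∧ (fval n l mu ρ = fval n l mu τ → ρ = τ) := by
  classical
  have hccmu : ∀ m, cc mu m ≤ cc ρ m := fun m =>
    Finset.sum_le_sum fun j _ => (hsρ j).1
  have hle : ∀ i ∈ Finset.range n,
      cc ρ (mu.parts.getD i 0) - cc mu (mu.parts.getD i 0)
        ≤ cc τ (mu.parts.getD i 0) - cc mu (mu.parts.getD i 0) := by
    intro i _
    have := hcc (mu.parts.getD i 0)
    omega
  constructor
  · rw [fval_eq n l mu ρ hsρ, fval_eq n l mu τ hsτ]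
    exact Finset.sum_le_sum hle
  intro heq
  rw [fval_eq n l mu ρ hsρ, fval_eq n l mu τ hsτ] at heq
  have heach := (Finset.sum_eq_sum_iff_of_le hle).1 heq
  have hccEq : ∀ i < n, cc ρ (mu.parts.getD i 0) = cc τ (mu.parts.getD i 0) := by
    intro i hi
    have h := heach i (Finset.mem_range.2 hi)
    have h1 := hccmu (mu.parts.getD i 0)
    have h2 := hcc (mu.parts.getD i 0)
    omega
  by_contra hne
  have hnecol : ∃ j, colLen ρ j ≠ colLen τ j := by
    by_contra hall
    push_neg at hall
    exact hne (ext_colLen hall)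
  set j₀ := Nat.find hnecol with hj₀def
  have hj₀ : colLen ρ j₀ ≠ colLen τ j₀ := Nat.find_spec hnecol
  have hj₀min : ∀ j < j₀, colLen ρ j = colLen τ j := by
    intro j hj
    by_contra h
    exact (Nat.find_min hnecol hj) h
  have hccj₀ : ∀ m ≤ j₀, cc ρ m = cc τ m := by
    intro m hm
    exact Finset.sum_congr rfl fun j hj => hj₀min j (by have := Finset.mem_range.1 hj; omega)
  have hlt0 : cc ρ (j₀ + 1) < cc τ (j₀ + 1) := by
    have h1 := cc_succ ρ j₀
    have h2 := cc_succ τ j₀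
    have h3 := hccj₀ j₀ le_rfl
    have h4 := hcc (j₀ + 1)
    have h5 := hsρ j₀
    have h6 := hsτ j₀
    omega
  have hstr0 : colLen ρ j₀ = colLen mu j₀ ∧ colLen τ j₀ = colLen mu j₀ + 1 := by
    have h1 := cc_succ ρ j₀
    have h2 := cc_succ τ j₀
    have h3 := hccj₀ j₀ le_rfl
    have h5 := hsρ j₀
    have h6 := hsτ j₀
    omega
  have hex : ∃ j, j₀ < j ∧ cc ρ (j + 1) = cc τ (j + 1) := by
    refine ⟨j₀ + (n + l - 1) + 1, by omega, ?_⟩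
    have h1 := partOne_le ρ
    have h2 := partOne_le τ
    rw [cc_total ρ (by omega), cc_total τ (by omega)]
  set j₁ := Nat.find hex with hj₁def
  have hj₁ : j₀ < j₁ ∧ cc ρ (j₁ + 1) = cc τ (j₁ + 1) := Nat.find_spec hex
  have hj₁min : ∀ j, j₀ < j → j < j₁ → cc ρ (j + 1) ≠ cc τ (j + 1) := by
    intro j h1 h2
    intro heq2
    exact (Nat.find_min hex h2) ⟨h1, heq2⟩
  have hlt : ∀ j, j₀ ≤ j → j < j₁ → cc ρ (j + 1) < cc τ (j + 1) := by
    intro j h1 h2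
    rcases Nat.eq_or_lt_of_le h1 with heq1 | h1'
    · rw [← heq1]; exact hlt0
    · have := hj₁min j h1' h2
      have := hcc (j + 1)
      omega
  have hconst : ∀ j, j₀ ≤ j → j < j₁ → colLen mu (j + 1) = colLen mu j := by
    intro j h1 h2
    by_contra hne2
    have hanti := colLen_anti mu (by omega : j ≤ j + 1)
    have hi : colLen mu (j + 1) < n := by
      have := colLen_le mu (j + 1)
      omega
    have hgetD : mu.parts.getD (colLen mu (j + 1)) 0 = j + 1 := by
      refine nat_eq_of_lt_iff fun x => ?_
      rw [← lt_colLen_iff]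
      constructor
      · intro hx
        by_contra hxx
        push_neg at hxx
        have := colLen_anti mu (by omega : j + 1 ≤ x)
        omega
      · intro hx
        have := colLen_anti mu (by omega : x ≤ j)
        omega
    have h3 := hccEq (colLen mu (j + 1)) hi
    rw [hgetD] at h3
    have := hlt j h1 h2
    omega
  have hconstAll : ∀ d, j₀ + d ≤ j₁ → colLen mu (j₀ + d) = colLen mu j₀ := by
    intro d
    induction d with
    | zero => intro _; rfl
    | succ d ih =>
      intro hd
      have h1 : j₀ + d < j₁ := by omega
      have h2 := hconst (j₀ + d) (by omega) h1
      rw [show j₀ + (d + 1) = j₀ + d + 1 by omega, h2, ih (by omega)]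
  have hlt1 : cc ρ j₁ < cc τ j₁ := by
    have h2 := hlt (j₁ - 1) (by omega) (by omega)
    rw [show j₁ - 1 + 1 = j₁ by omega] at h2
    exact h2
  have hcolj₁ : colLen ρ j₁ = colLen mu j₁ + 1 ∧ colLen τ j₁ = colLen mu j₁ := by
    have h1 := cc_succ ρ j₁
    have h2 := cc_succ τ j₁
    have h3 := hj₁.2
    have h5 := hsρ j₁
    have h6 := hsτ j₁
    omega
  have hmono := colLen_anti ρ (le_of_lt hj₁.1)
  have h1 := hconstAll (j₁ - j₀) (by omega)
  rw [show j₀ + (j₁ - j₀) = j₁ by omega] at h1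
  omega

end Aux3

section Aux4
open Finset

variable {N : ℕ}

lemma mem_cells_iff (ρ : Partition N) (i j : ℕ) : (i, j) ∈ cells ρ ↔ i < colLen ρ j := by
  unfold cells
  simp only [Finset.mem_filter, Finset.mem_product, Finset.mem_range]
  constructor
  · rintro ⟨⟨h1, h2⟩, h3⟩
    exact (lt_colLen_iff ρ i j).2 h3
  · intro h
    have h3 := (lt_colLen_iff ρ i j).1 h
    refine ⟨⟨lt_of_lt_of_le h (colLen_le_length_s9 ρ j), colLen_zero_pos ρ (by omega)⟩, h3⟩

lemma cells_eq (ρ : Partition N) (B : ℕ) (hB : N < B) :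
    cells ρ = (Finset.range B ×ˢ Finset.range B).filter (fun c => c.1 < colLen ρ c.2) := by
  ext ⟨i, j⟩
  rw [mem_cells_iff]
  simp only [Finset.mem_filter, Finset.mem_product, Finset.mem_range]
  constructor
  · intro h
    have h1 := colLen_le ρ j
    have h2 := colLen_zero_pos ρ (by omega : 0 < colLen ρ j)
    have h3 := partOne_le ρ
    exact ⟨⟨by omega, by omega⟩, h⟩
  · rintro ⟨_, h⟩
    exact h

lemma card_prodfilter (B : ℕ) (c : ℕ → ℕ) (hc : ∀ j, c j ≤ B) :
    ((Finset.range B ×ˢ Finset.range B).filter (fun x : ℕ × ℕ => x.1 < c x.2)).card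
      = ∑ j ∈ Finset.range B, c j := by
  rw [Finset.card_filter, Finset.sum_product_right]
  refine Finset.sum_congr rfl fun j _ => ?_
  show (∑ x ∈ Finset.range B, if x < c j then 1 else 0) = c j
  rw [sum_ite_lt]
  have := hc j
  omega

lemma card_prodfilter2 (B : ℕ) (c : ℕ → ℕ) (q : ℕ → Prop) [DecidablePred q] (hc : ∀ j, c j ≤ B) :
    ((Finset.range B ×ˢ Finset.range B).filter (fun x : ℕ × ℕ => x.1 < c x.2 ∧ q x.2)).card
      = ∑ j ∈ Finset.range B, if q j then c j else 0 := by
  rw [Finset.card_filter, Finset.sum_product_right]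
  refine Finset.sum_congr rfl fun j _ => ?_
  show (∑ x ∈ Finset.range B, if x < c j ∧ q j then 1 else 0) = if q j then c j else 0
  by_cases hq : q j
  · simp only [hq, and_true, if_true]
    rw [sum_ite_lt]
    have := hc j
    omega
  · simp [hq]

lemma count_map_range {n : ℕ} (g : ℕ → Fin n) (m : ℕ) (x : Fin n) :
    ((List.range m).map g).count x = ((Finset.range m).filter (fun i => g i = x)).card := by
  classical
  induction m with
  | zero => simp
  | succ m ih =>
    rw [List.range_succ, List.map_append, List.count_append, Finset.range_add_one,
      Finset.filter_insert]
    by_cases h : g m = x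
    · rw [if_pos h, Finset.card_insert_of_notMem (by simp), ← ih]
      simp [List.count_cons, h]
    · rw [if_neg h, ← ih]
      simp [List.count_cons, h]

lemma count_colList {n : ℕ} (ρ : Partition N) (T : ℕ × ℕ → Fin n) (j : ℕ) (x : Fin n) :
    (colList ρ T j).count x
      = ((Finset.range (colLen ρ j)).filter (fun i => T (i, j) = x)).card :=
  count_map_range (fun i => T (i, j)) (colLen ρ j) x

lemma le_finLast {n : ℕ} [NeZero n] (x : Fin n) : x ≤ finLast n := by
  have h1 := x.isLt
  have h2 := NeZero.ne n
  simp only [finLast, Fin.le_def]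
  omega

lemma strip_of {n l : ℕ} [NeZero n] (mu : Partition (n - 1)) (ρ : Partition (n + l - 1)) (T : ℕ × ℕ → Fin n)
    (hfill : IsFilling l (finLast n) ρ T) (hshape : HasShapeRemoved ρ (finLast n) T mu) (j : ℕ) :
    colLen mu j ≤ colLen ρ j ∧ colLen ρ j ≤ colLen mu j + 1 := by
  have h1 := hshape j
  have h2 := hfill.2 j
  omega

lemma sp_bottom {n : ℕ} [NeZero n] (ρ : Partition N) (T : ℕ × ℕ → Fin n)
    (hstd : IsStandard ρ T) {i j : ℕ} (hij : i < colLen ρ j) (hsp : T (i, j) = finLast n) :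
    i + 1 = colLen ρ j := by
  by_contra h
  have hcell : (i + 1, j) ∈ cells ρ := (mem_cells_iff ρ (i + 1) j).2 (by omega)
  have hlt := hstd.1 i j hcell
  rw [hsp] at hlt
  exact absurd (le_finLast (T (i + 1, j))) (not_le.2 hlt)

lemma wval_eq {n l : ℕ} [NeZero n] (mu : Partition (n - 1)) (ρ : Partition (n + l - 1))
    (T : ℕ × ℕ → Fin n)
    (hfill : IsFilling l (finLast n) ρ T) (hstd : IsStandard ρ T)
    (hshape : HasShapeRemoved ρ (finLast n) T mu) :
    wval ρ (finLast n) T = fval n l mu ρ := by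
  classical
  have hcount : ∀ j, (colList ρ T j).count (finLast n) = colLen ρ j - colLen mu j := by
    intro j
    have h1 := hshape j
    omega
  have hfilter : (cells ρ).filter (fun c =>
        ∃ i' ∈ Finset.range (colLen ρ c.2), c.1 < i' ∧ T (i', c.2) = finLast n)
      = (Finset.range (n + l) ×ˢ Finset.range (n + l)).filter
          (fun c => c.1 < colLen mu c.2 ∧ colLen ρ c.2 = colLen mu c.2 + 1) := by
    ext ⟨i, j⟩
    simp only [Finset.mem_filter, Finset.mem_product, Finset.mem_range]
    rw [mem_cells_iff]
    constructor
    · rintro ⟨hij, i', hi', hii', hsp⟩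
      have hbot := sp_bottom ρ T hstd hi' hsp
      have hc1 : (colList ρ T j).count (finLast n) ≠ 0 := by
        intro h0
        rw [List.count_eq_zero] at h0
        exact h0 (List.mem_map.2 ⟨i', List.mem_range.2 hi', hsp⟩)
      have h2 := hcount j
      have h3 := hfill.2 j
      have h4 := hshape j
      have hjlt : j < partOne mu := by
        apply colLen_zero_pos mu
        omega
      have h5 := partOne_le mu
      have h6 := colLen_le ρ j
      have h7 := colLen_le mu j
      refine ⟨⟨by omega, by omega⟩, by omega, by omega⟩
    · rintro ⟨⟨hiB, hjB⟩, him, hstrip⟩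
      have h2 := hcount j
      have hc1 : 0 < (colList ρ T j).count (finLast n) := by omega
      have hmem := List.count_pos_iff.1 hc1
      obtain ⟨i', hi'mem, hTi'⟩ := List.mem_map.1 hmem
      have hi' := List.mem_range.1 hi'mem
      have hbot := sp_bottom ρ T hstd hi' hTi'
      refine ⟨by omega, i', hi', by omega, hTi'⟩
  unfold wval
  rw [hfilter, card_prodfilter2 (n + l) (fun j => colLen mu j)
    (fun j => colLen ρ j = colLen mu j + 1)
    (fun j => by show colLen mu j ≤ n + l; have := colLen_le mu j; omega)]
  unfold fval
  refine Finset.sum_congr rfl fun j _ => ?_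
  have h1 := hshape j
  have h2 := hfill.2 j
  by_cases hq : colLen ρ j = colLen mu j + 1
  · rw [if_pos hq, hq]
    have h9 : colLen mu j + 1 - colLen mu j = 1 := by omega
    rw [h9, mul_one]
  · rw [if_neg hq]
    have h9 : colLen ρ j = colLen mu j := by omega
    rw [h9]
    simp

lemma exists_std_filling {n l : ℕ} [NeZero n] (hl : 0 < l)
    (mu : Partition (n - 1)) (ρ : Partition (n + l - 1))
    (hstrip : ∀ j, colLen mu j ≤ colLen ρ j ∧ colLen ρ j ≤ colLen mu j + 1) :
    ∃ T, IsFilling l (finLast n) ρ T ∧ IsStandard ρ T ∧ HasShapeRemoved ρ (finLast n) T mu := by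
  classical
  have hn : 0 < n := Nat.pos_of_ne_zero (NeZero.ne n)
  have hval : ∀ i j, i < colLen mu j → cc mu j + i < n - 1 := by
    intro i j h
    have h1 : cc mu (j + 1) ≤ n - 1 := cc_le mu (j + 1)
    have h2 := cc_succ mu j
    omega
  set T : ℕ × ℕ → Fin n := fun c =>
    if h : c.1 < colLen mu c.2 then ⟨cc mu c.2 + c.1, by have := hval c.1 c.2 h; omega⟩
    else finLast n with hT
  have hTsp : ∀ i j, T (i, j) = finLast n ↔ ¬ i < colLen mu j := by
    intro i j
    constructor
    · intro h hij
      rw [hT] at h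
      simp only [dif_pos hij] at h
      have := hval i j hij
      rw [Fin.ext_iff] at h
      simp only [finLast] at h
      omega
    · intro h
      rw [hT]
      simp only [dif_neg h]
  have hshape : HasShapeRemoved ρ (finLast n) T mu := by
    intro j
    rw [count_colList]
    have hfe : (Finset.range (colLen ρ j)).filter (fun i => T (i, j) = finLast n)
        = Finset.Ico (colLen mu j) (colLen ρ j) := by
      ext i
      simp only [Finset.mem_filter, Finset.mem_range, Finset.mem_Ico]
      rw [hTsp i j]
      omega
    rw [hfe, Nat.card_Ico]
    have := (hstrip j).1
    omega
  have hstd : IsStandard ρ T := by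
    constructor
    · intro i j hcell
      rw [mem_cells_iff] at hcell
      have hstrj := hstrip j
      have hij : i < colLen mu j := by omega
      rw [hT]
      simp only
      rw [dif_pos hij]
      by_cases h2 : i + 1 < colLen mu j
      · rw [dif_pos h2]
        simp only [Fin.lt_def]
        omega
      · rw [dif_neg h2]
        have := hval i j hij
        simp only [Fin.lt_def, finLast]
        omega
    · intro i j hcell
      rw [mem_cells_iff] at hcell
      by_cases h2 : i < colLen mu (j + 1)
      · have h1 : i < colLen mu j := lt_of_lt_of_le h2 (colLen_anti mu (by omega : j ≤ j + 1))
        rw [hT]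
        simp only
        rw [dif_pos h1, dif_pos h2]
        simp only [Fin.le_def]
        have h3 := cc_mono mu (by omega : j ≤ j + 1)
        omega
      · have : T (i, j + 1) = finLast n := (hTsp i (j + 1)).2 h2
        rw [this]
        exact le_finLast _
  have hcount1 : ∀ j : ℕ, (colList ρ T j).count (finLast n) ≤ 1 := by
    intro j
    have h1 := hshape j
    have h2 := hstrip j
    omega
  have hfill : IsFilling l (finLast n) ρ T := by
    refine ⟨?_, hcount1⟩
    set p : ℕ × ℕ → Prop := fun c => c.1 < colLen mu c.2 with hp
    have hsplit : (cells ρ).val.map T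
        = ((cells ρ).filter p).val.map T + ((cells ρ).filter (fun c => ¬ p c)).val.map T := by
      rw [Finset.filter_val, Finset.filter_val, ← Multiset.map_add, Multiset.filter_add_not]
    have hA : ((cells ρ).filter p).card = n - 1 := by
      have he : (cells ρ).filter p
          = (Finset.range (n + l) ×ˢ Finset.range (n + l)).filter (fun c => c.1 < colLen mu c.2) := by
        ext ⟨i, j⟩
        simp only [hp, Finset.mem_filter, Finset.mem_product, Finset.mem_range]
        rw [mem_cells_iff]
        constructor
        · rintro ⟨h1, h2⟩
          have h3 := colLen_le mu j
          have h4 := colLen_zero_pos mu (by omega : 0 < colLen mu j)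
          have h5 := partOne_le mu
          exact ⟨⟨by omega, by omega⟩, h2⟩
        · rintro ⟨⟨h1, h2⟩, h3⟩
          have := (hstrip j).1
          exact ⟨by omega, h3⟩
      rw [he, card_prodfilter (n + l) _ (fun j => by have := colLen_le mu j; omega)]
      exact cc_total mu (le_trans (partOne_le mu) (by omega : n - 1 ≤ n + l))
    have hcard : (cells ρ).card = n + l - 1 := by
      rw [cells_eq ρ (n + l) (by omega),
        card_prodfilter (n + l) _ (fun j => by have := colLen_le ρ j; omega)]
      exact cc_total ρ (le_trans (partOne_le ρ) (by omega))
    have hBcard : ((cells ρ).filter (fun c => ¬ p c)).card = l := by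
      have := Finset.card_filter_add_card_filter_not (s := cells ρ) (p := p)
      omega
    have hBmap : ((cells ρ).filter (fun c => ¬ p c)).val.map T
        = Multiset.replicate l (finLast n) := by
      rw [Multiset.eq_replicate]
      constructor
      · rw [Multiset.card_map]
        exact hBcard
      · intro b hb
        obtain ⟨c, hc, rfl⟩ := Multiset.mem_map.1 hb
        rw [Finset.mem_val, Finset.mem_filter] at hc
        exact (hTsp c.1 c.2).2 hc.2
    have hinj : ∀ x ∈ (cells ρ).filter p, ∀ y ∈ (cells ρ).filter p, T x = T y → x = y := by
      rintro ⟨i, j⟩ hx ⟨i', j'⟩ hy hxy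
      rw [Finset.mem_filter] at hx hy
      have hxp : i < colLen mu j := hx.2
      have hyp : i' < colLen mu j' := hy.2
      rw [hT] at hxy
      simp only [dif_pos hxp, dif_pos hyp, Fin.mk.injEq] at hxy
      have hjj : j = j' := by
        by_contra hne
        rcases Nat.lt_or_ge j j' with h | h
        · have ha := cc_mono mu (by omega : j + 1 ≤ j')
          have hb := cc_succ mu j
          omega
        · have hne2 : j' < j := by omega
          have ha := cc_mono mu (by omega : j' + 1 ≤ j)
          have hb := cc_succ mu j'
          omega
      subst hjj
      simp only [Prod.mk.injEq]
      exact ⟨by omega, trivial⟩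
    have himg : ((cells ρ).filter p).image T = Finset.univ.erase (finLast n) := by
      apply Finset.eq_of_subset_of_card_le
      · intro x hx
        obtain ⟨c, hc, rfl⟩ := Finset.mem_image.1 hx
        rw [Finset.mem_filter] at hc
        rw [Finset.mem_erase]
        refine ⟨?_, Finset.mem_univ _⟩
        intro heq
        exact (hTsp c.1 c.2).1 heq hc.2
      · rw [Finset.card_erase_of_mem (Finset.mem_univ _), Finset.card_univ, Fintype.card_fin,
          Finset.card_image_of_injOn (fun x hx y hy => hinj x hx y hy), hA]
    have hnodup : (((cells ρ).filter p).val.map T).Nodup :=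
      Multiset.Nodup.map_on (fun x hx y hy => hinj x hx y hy) ((cells ρ).filter p).nodup
    have hAmap : ((cells ρ).filter p).val.map T = (Finset.univ.erase (finLast n)).val := by
      rw [← himg, Finset.image_val, Multiset.dedup_eq_self.2 hnodup]
    rw [hsplit, hAmap, hBmap]
    unfold fillContent
    have huniv : (Finset.univ : Finset (Fin n)).val
        = finLast n ::ₘ (Finset.univ.erase (finLast n)).val := by
      rw [Finset.erase_val, Multiset.cons_erase (Finset.mem_univ (finLast n))]
    rw [huniv]
    have hrep : Multiset.replicate l (finLast n)
        = finLast n ::ₘ Multiset.replicate (l - 1) (finLast n) := by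
      rw [← Multiset.replicate_succ]
      congr 1
      omega
    rw [hrep]
    rw [Multiset.add_cons, Multiset.add_cons]
    rw [add_comm]
  exact ⟨T, hfill, hstd, hshape⟩

end Aux4


/-- Lemma `maximum element`. For the lower filter F = {ρ ⊴ λ} and
μ ∈ P_{n-1}, if X = ⟨μ⟩^l ∩ F is nonempty then it has a unique strict minimizer of w_μ. -/
theorem statement9 (n l : ℕ) [NeZero n] (hl : 0 < l)
    (lam : Partition (n + l - 1)) (hlam : l ≤ partOne lam)
    (mu : Partition (n - 1))
    (hX : ∃ rho : Partition (n + l - 1), (l ≤ partOne rho ∧ domLE rho lam) ∧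
        ∃ T, IsFilling l (finLast n) rho T ∧ IsStandard rho T ∧
          HasShapeRemoved rho (finLast n) T mu) :
    ∃ tlam : Partition (n + l - 1),
      ((l ≤ partOne tlam ∧ domLE tlam lam) ∧
        ∃ T, IsFilling l (finLast n) tlam T ∧ IsStandard tlam T ∧
          HasShapeRemoved tlam (finLast n) T mu) ∧
      ∀ T, IsFilling l (finLast n) tlam T → IsStandard tlam T →
        HasShapeRemoved tlam (finLast n) T mu →
      ∀ rho : Partition (n + l - 1), (l ≤ partOne rho ∧ domLE rho lam) → rho ≠ tlam →
      ∀ T', IsFilling l (finLast n) rho T' → IsStandard rho T' →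
        HasShapeRemoved rho (finLast n) T' mu →
        wval tlam (finLast n) T < wval rho (finLast n) T' := by
  classical
  obtain ⟨rho0, ⟨hρ0l, hρ0dom⟩, T0, hT0f, hT0s, hT0sh⟩ := hX
  have hn : 0 < n := Nat.pos_of_ne_zero (NeZero.ne n)
  set X : Partition (n + l - 1) → Prop := fun ρ =>
    (∀ j, colLen mu j ≤ colLen ρ j ∧ colLen ρ j ≤ colLen mu j + 1) ∧
      l ≤ partOne ρ ∧ domLE ρ lam with hXdef
  have hρ0X : X rho0 := ⟨strip_of mu rho0 T0 hT0f hT0sh, hρ0l, hρ0dom⟩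
  set V : Set ℕ := {v | ∃ ρ, X ρ ∧ fval n l mu ρ = v} with hV
  have hVne : V.Nonempty := ⟨fval n l mu rho0, rho0, hρ0X, rfl⟩
  obtain ⟨ρmin, hρminX, hρminval⟩ : ∃ ρ, X ρ ∧ fval n l mu ρ = sInf V := Nat.sInf_mem hVne
  obtain ⟨Tm, hTmf, hTms, hTmsh⟩ := exists_std_filling hl mu ρmin hρminX.1
  refine ⟨ρmin, ⟨⟨hρminX.2.1, hρminX.2.2⟩, Tm, hTmf, hTms, hTmsh⟩, ?_⟩
  intro T hTf hTs hTsh ρ hρF hρne T' hT'f hT's hT'sh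
  have hρX : X ρ := ⟨strip_of mu ρ T' hT'f hT'sh, hρF.1, hρF.2⟩
  rw [wval_eq mu ρmin T hTf hTs hTsh, wval_eq mu ρ T' hT'f hT's hT'sh]
  obtain ⟨σ, hσstrip, hσcc⟩ := join_strip mu ρmin ρ hρminX.1 hρX.1
  have hσX : X σ := by
    refine ⟨hσstrip, ?_, ?_⟩
    · have hdom : domLE ρmin σ := (dom_iff_cc _ _).2 fun m => by
        rw [hσcc m]; exact min_le_left _ _
      have h1 := hdom 1
      have hpo : ∀ κ : Partition (n + l - 1), (κ.parts.take 1).sum = partOne κ := by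
        intro κ
        rw [take_sum, Finset.sum_range_one, partOne_eq_getD]
      rw [hpo, hpo] at h1
      have := hρminX.2.1
      omega
    · rw [dom_iff_cc]
      intro m
      rw [hσcc m]
      have h1 := (dom_iff_cc ρmin lam).1 hρminX.2.2 m
      have h2 := (dom_iff_cc ρ lam).1 hρX.2.2 m
      omega
  have hσge : sInf V ≤ fval n l mu σ := Nat.sInf_le ⟨σ, hσX, rfl⟩
  have hccσmin : ∀ m, cc σ m ≤ cc ρmin m := fun m => by
    rw [hσcc m]; exact min_le_left _ _
  have hanti1 := fval_anti n l hn mu σ ρmin hσstrip hρminX.1 hccσmin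
  have hσeq : fval n l mu σ = fval n l mu ρmin := by
    have := hanti1.1
    omega
  have hσmin : σ = ρmin := hanti1.2 hσeq
  have hccminρ : ∀ m, cc ρmin m ≤ cc ρ m := fun m => by
    have h := hσcc m
    rw [hσmin] at h
    omega
  have hanti2 := fval_anti n l hn mu ρmin ρ hρminX.1 hρX.1 hccminρ
  rcases Nat.eq_or_lt_of_le hanti2.1 with heq | hlt
  · exact absurd (hanti2.2 heq).symm hρne
  · exact hlt


end SpechtLL
end

section
/- Let I ⊆ S = K[x_1,…,x_n] be a graded ideal and G ⊆ I a Gröbner basis of I with respect to the lexicographic order with x_1 < x_2 < … < x_n. If every element of G is a product of linear forms, then G is a Gröbner basis of I with respect to every monomial order ≺ satisfying x_1 ≺ x_2 ≺ … ≺ x_n. -/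
open MvPolynomial

namespace SpechtLL

variable (K : Type*) [Field K]

section AuxLemmasForStatement13

variable {F : Type*} [Field F] {n : ℕ}

lemma mo_asymm {lt : (Fin n →₀ ℕ) → (Fin n →₀ ℕ) → Prop} (h : IsMonomialOrder lt)
    {a b : Fin n →₀ ℕ} (hab : lt a b) : ¬ lt b a :=
  fun hba => h.2.1 a (h.1 a b a hab hba)

lemma lexLt_single {i j : Fin n} (h : i < j) :
    lexLt (Finsupp.single i (1:ℕ)) (Finsupp.single j 1) := by
  refine ⟨j, ?_, ?_⟩
  · rw [Finsupp.single_apply, Finsupp.single_apply, if_neg h.ne, if_pos rfl]; norm_num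
  · intro k hk
    rw [Finsupp.single_apply, Finsupp.single_apply, if_neg (h.trans hk).ne, if_neg hk.ne]

lemma lexLt_mo : IsMonomialOrder (lexLt (n := n)) := by
  refine ⟨?_, ?_, ?_, ?_, ?_⟩
  · rintro a b c ⟨i₁, h₁, e₁⟩ ⟨i₂, h₂, e₂⟩
    rcases lt_trichotomy i₁ i₂ with h | h | h
    · exact ⟨i₂, by rw [e₁ i₂ h]; exact h₂, fun j hj => (e₁ j (h.trans hj)).trans (e₂ j hj)⟩
    · subst h; exact ⟨i₁, h₁.trans h₂, fun j hj => (e₁ j hj).trans (e₂ j hj)⟩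
    · exact ⟨i₁, by rw [← e₂ i₁ h]; exact h₁, fun j hj => (e₁ j hj).trans (e₂ j (h.trans hj))⟩
  · rintro a ⟨i, hi, -⟩; exact lt_irrefl _ hi
  · intro a b
    by_cases hab : a = b
    · exact Or.inl hab
    · have hne : (Finset.univ.filter (fun i : Fin n => a i ≠ b i)).Nonempty := by
        rcases Finsupp.ne_iff.mp hab with ⟨i, hi⟩
        exact ⟨i, by simp [hi]⟩
      set i := (Finset.univ.filter (fun i : Fin n => a i ≠ b i)).max' hne with hidef
      have hi : a i ≠ b i := by
        have := (Finset.univ.filter (fun i : Fin n => a i ≠ b i)).max'_mem hne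
        simpa using this
      have hj : ∀ j : Fin n, i < j → a j = b j := by
        intro j hj
        by_contra hne2
        exact absurd (Finset.le_max' _ j (by simp [hne2])) (not_le.mpr hj)
      rcases lt_or_gt_of_ne hi with h | h
      · exact Or.inr (Or.inl ⟨i, h, hj⟩)
      · exact Or.inr (Or.inr ⟨i, h, fun j hjj => (hj j hjj).symm⟩)
  · rintro a b c ⟨i, hi, hj⟩
    exact ⟨i, by simpa [Finsupp.add_apply] using Nat.add_lt_add_right hi (c i),
      fun j hjj => by simp [Finsupp.add_apply, hj j hjj]⟩
  · intro a ha
    have hne : (Finset.univ.filter (fun i : Fin n => a i ≠ 0)).Nonempty := by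
      rcases Finsupp.ne_iff.mp ha with ⟨i, hi⟩
      exact ⟨i, by simpa using hi⟩
    set i := (Finset.univ.filter (fun i : Fin n => a i ≠ 0)).max' hne with hidef
    have hi : a i ≠ 0 := by
      have := (Finset.univ.filter (fun i : Fin n => a i ≠ 0)).max'_mem hne
      simpa using this
    refine ⟨i, by simpa using Nat.pos_of_ne_zero hi, fun j hjj => ?_⟩
    by_contra hne2
    have : a j ≠ 0 := fun h0 => hne2 (by simp [h0])
    exact absurd (Finset.le_max' _ j (by simp [this])) (not_le.mpr hjj)

lemma mo_wf {lt : (Fin n →₀ ℕ) → (Fin n →₀ ℕ) → Prop} (h : IsMonomialOrder lt) :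
    WellFounded lt := by
  obtain ⟨htr, hirr, htri, hadd, hzero⟩ := h
  letI : IsTrans (Fin n →₀ ℕ) lt := ⟨htr⟩
  letI : IsIrrefl (Fin n →₀ ℕ) lt := ⟨hirr⟩
  letI : IsStrictOrder (Fin n →₀ ℕ) lt := ⟨⟩
  rw [RelEmbedding.wellFounded_iff_isEmpty]
  constructor
  intro emb
  have hdesc : ∀ m k : ℕ, m < k → lt (emb k) (emb m) := fun m k hmk => emb.map_rel_iff.mpr hmk
  obtain ⟨m, k, hmk, hle⟩ := wellQuasiOrdered_le (α := Fin n →₀ ℕ) (fun j => emb j)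
  have h1 : lt (emb k) (emb m) := hdesc m k hmk
  rcases eq_or_ne (emb m) (emb k) with heq | hne
  · rw [heq] at h1; exact hirr _ h1
  · have hc : (emb k : Fin n →₀ ℕ) - emb m ≠ 0 := by
      intro h0
      apply hne
      have := tsub_add_cancel_of_le hle
      rw [h0, zero_add] at this
      exact this
    have h2 : lt (emb m) (emb k) := by
      have := hadd 0 ((emb k : Fin n →₀ ℕ) - emb m) (emb m) (hzero _ hc)
      rwa [zero_add, tsub_add_cancel_of_le hle] at this
    exact hirr _ (htr _ _ _ h1 h2)

lemma finset_exists_max {α : Type*} (r : α → α → Prop)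
    (htri : ∀ a b, a = b ∨ r a b ∨ r b a)
    (htr : ∀ a b c, r a b → r b c → r a c)
    (s : Finset α) (hs : s.Nonempty) : ∃ d ∈ s, ∀ e ∈ s, e ≠ d → r e d := by
  classical
  induction s using Finset.induction with
  | empty => simp at hs
  | @insert a s ha IH =>
    rcases s.eq_empty_or_nonempty with rfl | hsne
    · exact ⟨a, by simp, fun e he hne => absurd (by simpa using he) hne⟩
    · obtain ⟨d, hd, hmax⟩ := IH hsne
      rcases htri a d with heq | h | h
      · refine ⟨a, Finset.mem_insert_self a s, fun e he hne => ?_⟩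
        rcases Finset.mem_insert.mp he with rfl | he'
        · exact absurd rfl hne
        · have hed : e ≠ d := fun h2 => hne (h2.trans heq.symm)
          rw [heq]; exact hmax e he' hed
      · refine ⟨d, Finset.mem_insert_of_mem hd, fun e he hne => ?_⟩
        rcases Finset.mem_insert.mp he with rfl | he'
        · exact h
        · exact hmax e he' hne
      · refine ⟨a, Finset.mem_insert_self a s, fun e he hne => ?_⟩
        rcases Finset.mem_insert.mp he with rfl | he'
        · exact absurd rfl hne
        · rcases eq_or_ne e d with rfl | hed
          · exact h
          · exact htr e d a (hmax e he' hed) h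

variable {r : (Fin n →₀ ℕ) → (Fin n →₀ ℕ) → Prop}

lemma exists_initial (hr : IsMonomialOrder r) {f : MvPolynomial (Fin n) F} (hf : f ≠ 0) :
    ∃ d, IsInitialFor F r f d := by
  obtain ⟨d, hd, hmax⟩ := finset_exists_max r hr.2.2.1 hr.1 f.support
    (MvPolynomial.support_nonempty.mpr hf)
  exact ⟨d, hd, hmax⟩

lemma initial_unique (hr : IsMonomialOrder r) {f : MvPolynomial (Fin n) F} {d d' : Fin n →₀ ℕ}
    (h1 : IsInitialFor F r f d) (h2 : IsInitialFor F r f d') : d = d' := by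
  by_contra hne
  exact mo_asymm hr (h1.2 d' h2.1 (Ne.symm hne)) (h2.2 d h1.1 hne)

lemma initial_ne_zero {f : MvPolynomial (Fin n) F} {d : Fin n →₀ ℕ}
    (h : IsInitialFor F r f d) : f ≠ 0 := by
  intro h0
  rw [h0] at h
  simpa using h.1

lemma initial_mul (hr : IsMonomialOrder r) {f g : MvPolynomial (Fin n) F} {a b : Fin n →₀ ℕ}
    (hf : IsInitialFor F r f a) (hg : IsInitialFor F r g b) :
    IsInitialFor F r (f * g) (a + b) := by
  obtain ⟨htr, hirr, htri, hadd, -⟩ := hr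
  have hle : ∀ u ∈ f.support, ∀ v ∈ g.support, (u = a ∧ v = b) ∨ r (u + v) (a + b) := by
    intro u hu v hv
    by_cases hua : u = a
    · by_cases hvb : v = b
      · exact Or.inl ⟨hua, hvb⟩
      · right
        subst hua
        have h1 := hadd v b u (hg.2 v hv hvb)
        rwa [add_comm v u, add_comm b u] at h1
    · right
      by_cases hvb : v = b
      · subst hvb
        exact hadd u a _ (hf.2 u hu hua)
      · have h4 : r (a + v) (a + b) := by
          have := hadd v b a (hg.2 v hv hvb)
          rwa [add_comm v a, add_comm b a] at this
        exact htr _ _ _ (hadd u a v (hf.2 u hu hua)) h4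
  have hco : MvPolynomial.coeff (a + b) (f * g) =
      MvPolynomial.coeff a f * MvPolynomial.coeff b g := by
    rw [MvPolynomial.coeff_mul]
    refine Finset.sum_eq_single_of_mem ((a, b) : (Fin n →₀ ℕ) × (Fin n →₀ ℕ))
      (Finset.HasAntidiagonal.mem_antidiagonal.mpr rfl) ?_
    rintro ⟨u, v⟩ hp hpne
    by_cases hu : u ∈ f.support
    · by_cases hv : v ∈ g.support
      · rcases hle u hu v hv with ⟨rfl, rfl⟩ | hlt
        · exact absurd rfl hpne
        · rw [Finset.HasAntidiagonal.mem_antidiagonal] at hp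
          rw [hp] at hlt
          exact absurd hlt (hirr _)
      · rw [MvPolynomial.notMem_support_iff.mp hv, mul_zero]
    · rw [MvPolynomial.notMem_support_iff.mp hu, zero_mul]
  constructor
  · rw [MvPolynomial.mem_support_iff, hco]
    exact mul_ne_zero (MvPolynomial.mem_support_iff.mp hf.1)
      (MvPolynomial.mem_support_iff.mp hg.1)
  · intro e he hne
    obtain ⟨u, hu, v, hv, rfl⟩ := Finset.mem_add.mp (MvPolynomial.support_mul f g he)
    rcases hle u hu v hv with ⟨rfl, rfl⟩ | hlt
    · exact absurd rfl hne
    · exact hlt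

lemma initial_one (hr : IsMonomialOrder r) :
    IsInitialFor F r (1 : MvPolynomial (Fin n) F) 0 := by
  constructor
  · rw [MvPolynomial.mem_support_iff, MvPolynomial.coeff_one, if_pos rfl]
    exact one_ne_zero
  · intro e he hne
    rw [MvPolynomial.mem_support_iff, MvPolynomial.coeff_one, if_neg (Ne.symm hne)] at he
    exact absurd rfl he

lemma homog_one_support {p : MvPolynomial (Fin n) F} (hp : p.IsHomogeneous 1)
    {d : Fin n →₀ ℕ} (hd : d ∈ p.support) : ∃ i : Fin n, d = Finsupp.single i 1 := by
  have hdeg : d.degree = 1 := by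
    rw [Finsupp.degree_eq_weight_one]
    exact hp (MvPolynomial.mem_support_iff.mp hd)
  have hne : d.support.Nonempty := by
    rw [Finsupp.support_nonempty_iff]
    intro h0
    rw [h0] at hdeg
    simp at hdeg
  obtain ⟨i, hi⟩ := hne
  have hdi : d i = 1 := le_antisymm (hdeg ▸ Finsupp.le_degree i d)
    (Nat.one_le_iff_ne_zero.mpr (Finsupp.mem_support_iff.mp hi))
  refine ⟨i, Finsupp.ext fun j => ?_⟩
  rcases eq_or_ne j i with rfl | hji
  · rw [hdi, Finsupp.single_apply, if_pos rfl]
  · rw [Finsupp.single_apply, if_neg (Ne.symm hji)]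
    by_contra hne2
    have hj : j ∈ d.support := Finsupp.mem_support_iff.mpr hne2
    have : 2 ≤ d.degree := by
      have hsub : {i, j} ⊆ d.support := by
        intro x hx
        rcases Finset.mem_insert.mp hx with rfl | hx
        · exact hi
        · rw [Finset.mem_singleton.mp hx]; exact hj
      calc 2 = ({i, j} : Finset (Fin n)).card := by
                rw [Finset.card_insert_of_notMem (by simpa using Ne.symm hji),
                  Finset.card_singleton]
        _ = ∑ _x ∈ ({i, j} : Finset (Fin n)), 1 := Finset.card_eq_sum_ones _
        _ ≤ ∑ x ∈ ({i, j} : Finset (Fin n)), d x := by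
                refine Finset.sum_le_sum fun x hx => ?_
                exact Nat.one_le_iff_ne_zero.mpr (Finsupp.mem_support_iff.mp (hsub hx))
        _ ≤ ∑ x ∈ d.support, d x := Finset.sum_le_sum_of_subset_of_nonneg hsub
              (fun _ _ _ => Nat.zero_le _)
        _ = d.degree := rfl
    omega

lemma linear_initial_transfer {lt : (Fin n →₀ ℕ) → (Fin n →₀ ℕ) → Prop}
    (hlt : IsMonomialOrder lt)
    (hvar : ∀ i j : Fin n, i < j → lt (Finsupp.single i 1) (Finsupp.single j 1))
    {p : MvPolynomial (Fin n) F} (hp : p.IsHomogeneous 1) {a : Fin n →₀ ℕ}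
    (ha : IsInitialFor F lexLt p a) : IsInitialFor F lt p a := by
  refine ⟨ha.1, fun d hd hne => ?_⟩
  obtain ⟨i, rfl⟩ := homog_one_support hp hd
  obtain ⟨j, rfl⟩ := homog_one_support hp ha.1
  have hij : i ≠ j := fun h => hne (by rw [h])
  rcases lt_or_gt_of_ne hij with h | h
  · exact hvar i j h
  · exact absurd (lexLt_single h) (mo_asymm lexLt_mo (ha.2 _ hd hne))

lemma prod_initial_transfer {lt : (Fin n →₀ ℕ) → (Fin n →₀ ℕ) → Prop}
    (hlt : IsMonomialOrder lt)
    (hvar : ∀ i j : Fin n, i < j → lt (Finsupp.single i 1) (Finsupp.single j 1))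
    (L : List (MvPolynomial (Fin n) F)) (hL : ∀ p ∈ L, p.IsHomogeneous 1)
    {e : Fin n →₀ ℕ} (he : IsInitialFor F lexLt L.prod e) :
    IsInitialFor F lt L.prod e := by
  induction L generalizing e with
  | nil =>
    simp only [List.prod_nil] at he ⊢
    have := initial_unique lexLt_mo he (initial_one lexLt_mo)
    rw [this]
    exact initial_one hlt
  | cons p rest IH =>
    simp only [List.prod_cons] at he ⊢
    have hne : p * rest.prod ≠ 0 := initial_ne_zero he
    have hp0 : p ≠ 0 := fun h => hne (by rw [h, zero_mul])
    have hr0 : rest.prod ≠ 0 := fun h => hne (by rw [h, mul_zero])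
    obtain ⟨a, ha⟩ := exists_initial lexLt_mo hp0
    obtain ⟨b, hb⟩ := exists_initial lexLt_mo hr0
    have hab : IsInitialFor F lexLt (p * rest.prod) (a + b) := initial_mul lexLt_mo ha hb
    have heab : e = a + b := initial_unique lexLt_mo he hab
    rw [heab]
    exact initial_mul hlt
      (linear_initial_transfer hlt hvar (hL p List.mem_cons_self) ha)
      (IH (fun q hq => hL q (List.mem_cons_of_mem p hq)) hb)

end AuxLemmasForStatement13

/-- Lemma `product of linear forms`. A Gröbner basis (w.r.t. lex with
x₁ < ⋯ < xₙ) of a graded ideal consisting of products of linear forms is a Gröbner basis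
for every monomial order with x₁ ≺ x₂ ≺ ⋯ ≺ xₙ. -/
theorem statement13 (K : Type*) [Field K] (n : ℕ)
    (I : Ideal (MvPolynomial (Fin n) K))
    (hgraded : ∀ f ∈ I, ∀ k : ℕ, MvPolynomial.homogeneousComponent k f ∈ I)
    (G : Set (MvPolynomial (Fin n) K))
    (hGB : IsGroebnerBasisFor K lexLt G I)
    (hlin : ∀ g ∈ G, ∃ L : List (MvPolynomial (Fin n) K),
        (∀ p ∈ L, p.IsHomogeneous 1) ∧ g = L.prod)
    (lt : (Fin n →₀ ℕ) → (Fin n →₀ ℕ) → Prop)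
    (hlt : IsMonomialOrder lt)
    (hvar : ∀ i j : Fin n, i < j → lt (Finsupp.single i 1) (Finsupp.single j 1)) :
    IsGroebnerBasisFor K lt G I := by
  classical
  obtain ⟨hGI, hGBmain⟩ := hGB
  refine ⟨hGI, ?_⟩
  have key : ∀ d₀ : Fin n →₀ ℕ, ∀ f ∈ I, f ≠ 0 → IsInitialFor K lexLt f d₀ →
      ∀ d, IsInitialFor K lt f d → ∃ g ∈ G, ∃ e, IsInitialFor K lt g e ∧ e ≤ d := by
    intro d₀
    induction d₀ using WellFounded.induction (mo_wf (lexLt_mo (n := n))) with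
    | _ d₀ IH =>
    intro f hfI hf0 hflex d hflt
    obtain ⟨g, hgG, e, hgelex, hed₀⟩ := hGBmain f hfI hf0 d₀ hflex
    have hgelt : IsInitialFor K lt g e := by
      obtain ⟨L, hL, rfl⟩ := hlin g hgG
      exact prod_initial_transfer hlt hvar L hL hgelex
    rcases eq_or_ne d₀ d with rfl | hdd
    · exact ⟨g, hgG, e, hgelt, hed₀⟩
    have hd₀d : lt d₀ d := hflt.2 d₀ hflex.1 hdd
    set s : Fin n →₀ ℕ := d₀ - e with hs
    have hse : s + e = d₀ := tsub_add_cancel_of_le hed₀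
    set q : MvPolynomial (Fin n) K := (MvPolynomial.monomial s (1 : K)) * g with hq
    have hqsupp : ∀ t ∈ q.support, ∃ u ∈ g.support, t = s + u := by
      intro t ht
      have := MvPolynomial.support_mul (MvPolynomial.monomial s (1 : K)) g ht
      obtain ⟨u, hu, v, hv, rfl⟩ := Finset.mem_add.mp this
      rw [MvPolynomial.support_monomial] at hu
      have hu' : u = s := by simpa using hu
      exact ⟨v, hv, by rw [hu']⟩
    have hqlex : ∀ t ∈ q.support, t = d₀ ∨ lexLt t d₀ := by
      intro t ht
      obtain ⟨u, hu, rfl⟩ := hqsupp t ht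
      rcases eq_or_ne u e with rfl | hue
      · exact Or.inl hse
      · right
        have := lexLt_mo.2.2.2.1 u e s (hgelex.2 u hu hue)
        rwa [add_comm u s, add_comm e s, hse] at this
    have hqlt : ∀ t ∈ q.support, lt t d := by
      intro t ht
      obtain ⟨u, hu, rfl⟩ := hqsupp t ht
      rcases eq_or_ne u e with rfl | hue
      · rwa [hse]
      · have h1 : lt (s + u) d₀ := by
          have := hlt.2.2.2.1 u e s (hgelt.2 u hu hue)
          rwa [add_comm u s, add_comm e s, hse] at this
        exact hlt.1 _ _ _ h1 hd₀d
    have hcq : MvPolynomial.coeff d₀ q = MvPolynomial.coeff e g := by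
      rw [hq, ← hse, MvPolynomial.coeff_monomial_mul, one_mul]
    set h : MvPolynomial (Fin n) K :=
      (MvPolynomial.coeff e g) • f - (MvPolynomial.coeff d₀ f) • q with hh
    have hhI : h ∈ I := by
      rw [hh, hq, MvPolynomial.smul_eq_C_mul, MvPolynomial.smul_eq_C_mul]
      exact I.sub_mem (I.mul_mem_left _ hfI)
        (I.mul_mem_left _ (I.mul_mem_left _ (hGI g hgG)))
    have hcoeff : ∀ t, MvPolynomial.coeff t h =
        MvPolynomial.coeff e g * MvPolynomial.coeff t f -
          MvPolynomial.coeff d₀ f * MvPolynomial.coeff t q := by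
      intro t
      rw [hh, MvPolynomial.coeff_sub, MvPolynomial.coeff_smul, MvPolynomial.coeff_smul]
      simp [smul_eq_mul]
    have hge0 : MvPolynomial.coeff e g ≠ 0 := MvPolynomial.mem_support_iff.mp hgelex.1
    have hdq : MvPolynomial.coeff d q = 0 := by
      by_contra hne
      have := hqlt d (MvPolynomial.mem_support_iff.mpr hne)
      exact hlt.2.1 d this
    have hcd : MvPolynomial.coeff d h = MvPolynomial.coeff e g * MvPolynomial.coeff d f := by
      rw [hcoeff, hdq, mul_zero, sub_zero]
    have hcd0 : MvPolynomial.coeff d h ≠ 0 := by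
      rw [hcd]
      exact mul_ne_zero hge0 (MvPolynomial.mem_support_iff.mp hflt.1)
    have hh0 : h ≠ 0 := fun h0 => hcd0 (by rw [h0, MvPolynomial.coeff_zero])
    have hhsupp : ∀ t ∈ h.support, t ∈ f.support ∨ t ∈ q.support := by
      intro t ht
      by_contra hcon
      push_neg at hcon
      have h1 := MvPolynomial.notMem_support_iff.mp hcon.1
      have h2 := MvPolynomial.notMem_support_iff.mp hcon.2
      have := hcoeff t
      rw [h1, h2, mul_zero, mul_zero, sub_zero] at this
      exact MvPolynomial.mem_support_iff.mp ht this
    have hhlt : IsInitialFor K lt h d := by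
      refine ⟨MvPolynomial.mem_support_iff.mpr hcd0, fun t ht htd => ?_⟩
      rcases hhsupp t ht with htf | htq
      · exact hflt.2 t htf htd
      · exact hqlt t htq
    have hcd₀ : MvPolynomial.coeff d₀ h = 0 := by
      rw [hcoeff, hcq, mul_comm, sub_self]
    obtain ⟨d₁, hd₁⟩ := exists_initial lexLt_mo hh0
    have hd₁lt : lexLt d₁ d₀ := by
      have hd₁ne : d₁ ≠ d₀ := by
        intro hcon
        have := MvPolynomial.mem_support_iff.mp hd₁.1
        rw [hcon, hcd₀] at this
        exact this rfl
      rcases hhsupp d₁ hd₁.1 with htf | htq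
      · exact hflex.2 d₁ htf hd₁ne
      · rcases hqlex d₁ htq with heq | hlt'
        · exact absurd heq hd₁ne
        · exact hlt'
    exact IH d₁ hd₁lt h hhI hh0 hd₁ d hhlt
  intro f hfI hf0 d hd
  obtain ⟨d₀, hd₀⟩ := exists_initial lexLt_mo hf0
  exact key d₀ f hfI hf0 hd₀ d hd


end SpechtLL
end
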